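/- arXiv:1606.07141 — 2 statements merged into one kernel-verified Lean document; each statement's English description precedes it below -/
import Mathlib

section
/- If X_1 has a Gaussian distribution on ℝ² with mean μ and covariance matrix Σ (possibly degenerate), then the radial minimum function ubar I is convex. -/
open MeasureTheory Set Filter
open scoped ENNReal NNReal RealInnerProductSpace Topology

noncomputable section

/-- The plane `ℝ²`. -/
abbrev E2 : Type := EuclideanSpace ℝ (Fin 2)

/-- The Laplace transform `𝓛(u) = 𝔼 e^{u·X₁}` of the random vector `X1`. -/
def lapT {Ω : Type*} [MeasurableSpace Ω] (P : Measure Ω) (X1 : Ω → E2) (u : E2) : ℝ :=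
  ∫ ω, Real.exp ⟪u, X1 ω⟫ ∂P

/-- The cumulant generating function `K(u) = log 𝓛(u)`. -/
def cgfT {Ω : Type*} [MeasurableSpace Ω] (P : Measure Ω) (X1 : Ω → E2) (u : E2) : ℝ :=
  Real.log (lapT P X1 u)

/-- The rate function `I = K*`, the Legendre–Fenchel conjugate of `K`.
Since `I ≥ 0` (the value `0 = 0·v - K(0)` is always attained in the supremum),
we may record it as an `ℝ≥0∞`-valued supremum, clamping negatives to `0`. -/
def rateI {Ω : Type*} [MeasurableSpace Ω] (P : Measure Ω) (X1 : Ω → E2) (v : E2) : ℝ≥0∞ :=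
  ⨆ u : E2, ENNReal.ofReal (⟪u, v⟫ - cgfT P X1 u)

/-- The radial minimum function `ubar I (r) = inf_{|ℓ|=1} I(rℓ)`, `+∞` for `r < 0`. -/
def radMin {Ω : Type*} [MeasurableSpace Ω] (P : Measure Ω) (X1 : Ω → E2) (r : ℝ) : ℝ≥0∞ :=
  if r < 0 then ⊤ else ⨅ ℓ ∈ {ℓ : E2 | ‖ℓ‖ = 1}, rateI P X1 (r • ℓ)

/-- The set of minimal directions `ubar Λ_r = argmin_{|ℓ|=1} I(rℓ)`. -/
def minDirs {Ω : Type*} [MeasurableSpace Ω] (P : Measure Ω) (X1 : Ω → E2) (r : ℝ) : Set E2 :=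
  {ℓ : E2 | ‖ℓ‖ = 1 ∧ ∀ ℓ' : E2, ‖ℓ'‖ = 1 → rateI P X1 (r • ℓ) ≤ rateI P X1 (r • ℓ')}

/-- The topological support of a measure on `ℝ²`: the points all of whose open
neighbourhoods have positive measure. -/
def msupp (ν : Measure E2) : Set E2 := {x | ∀ U : Set E2, IsOpen U → x ∈ U → 0 < ν U}

/-- The mean `μ = 𝔼 X₁`. -/
def meanv {Ω : Type*} [MeasurableSpace Ω] (P : Measure Ω) (X1 : Ω → E2) : E2 :=
  ∫ ω, X1 ω ∂P

/-- `r_min = min { |x| : x ∈ conv (supp X₁) }`. -/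
def rmin {Ω : Type*} [MeasurableSpace Ω] (P : Measure Ω) (X1 : Ω → E2) : ℝ :=
  sInf (norm '' (convexHull ℝ (msupp (P.map X1))))

/-- `r_max = max { |x| : x ∈ supp X₁ }`, as an element of `[0,∞]` (possibly `∞`). -/
def rmaxE {Ω : Type*} [MeasurableSpace Ω] (P : Measure Ω) (X1 : Ω → E2) : ℝ≥0∞ :=
  ⨆ y ∈ msupp (P.map X1), (‖y‖₊ : ℝ≥0∞)

/-- Convexity of an `[0,∞]`-valued function on a subset of `ℝ`. -/
def ENNConvexOn (s : Set ℝ) (g : ℝ → ℝ≥0∞) : Prop :=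
  ∀ ⦃x⦄, x ∈ s → ∀ ⦃y⦄, y ∈ s → ∀ a b : ℝ≥0, a + b = 1 →
    g ((a : ℝ) * x + (b : ℝ) * y) ≤ (a : ℝ≥0∞) * g x + (b : ℝ≥0∞) * g y

/-- The largest convex minorant of an `[0,∞]`-valued function on `ℝ`. -/
def convMin (g : ℝ → ℝ≥0∞) (x : ℝ) : ℝ≥0∞ :=
  ⨆ h ∈ {h : ℝ → ℝ≥0∞ | ENNConvexOn Set.univ h ∧ ∀ y, h y ≤ g y}, h x

/-- The covariance matrix `Σ = 𝔼(X₁X₁ᵀ) − μμᵀ`. -/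
def covM {Ω : Type*} [MeasurableSpace Ω] (P : Measure Ω) (X1 : Ω → E2) :
    Matrix (Fin 2) (Fin 2) ℝ :=
  Matrix.of fun i j => (∫ ω, X1 ω i * X1 ω j ∂P) - meanv P X1 i * meanv P X1 j

namespace RadMinAux


/-! ### Generic helpers -/

lemma eq_of_sq_eq_sq {a b : ℝ} (ha : 0 ≤ a) (hb : 0 ≤ b) (h : a ^ 2 = b ^ 2) : a = b := by
  have h2 : (a - b) * (a + b) = 0 := by ring_nf; linarith
  rcases mul_eq_zero.1 h2 with h3 | h3 <;> linarith

lemma ofReal_max0 (A : ℝ) : ENNReal.ofReal (max A 0) = ENNReal.ofReal A := by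
  rcases le_total A 0 with h | h
  · rw [max_eq_right h, ENNReal.ofReal_of_nonpos h, ENNReal.ofReal_zero]
  · rw [max_eq_left h]

lemma ofReal_combo (a b : ℝ≥0) (A B : ℝ) :
    ENNReal.ofReal (a * A + b * B) ≤ (a : ℝ≥0∞) * ENNReal.ofReal A + b * ENNReal.ofReal B := by
  calc ENNReal.ofReal (a * A + b * B)
      ≤ ENNReal.ofReal (a * max A 0 + b * max B 0) := by
        apply ENNReal.ofReal_le_ofReal
        exact add_le_add (mul_le_mul_of_nonneg_left (le_max_left _ _) a.coe_nonneg)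
          (mul_le_mul_of_nonneg_left (le_max_left _ _) b.coe_nonneg)
    _ = ENNReal.ofReal ((a:ℝ) * max A 0) + ENNReal.ofReal ((b:ℝ) * max B 0) :=
        ENNReal.ofReal_add (by positivity) (by positivity)
    _ = (a : ℝ≥0∞) * ENNReal.ofReal (max A 0) + b * ENNReal.ofReal (max B 0) := by
        rw [ENNReal.ofReal_mul a.coe_nonneg, ENNReal.ofReal_mul b.coe_nonneg,
          ENNReal.ofReal_coe_nnreal, ENNReal.ofReal_coe_nnreal]
    _ = _ := by rw [ofReal_max0, ofReal_max0]

/-- distributing a nonneg scalar and sums over two infima -/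
lemma combo_le {s1 s2 : Set E2} (h1 : s1.Nonempty) (h2 : s2.Nonempty) (S : E2 → ℝ≥0∞)
    (a b : ℝ≥0) (c : ℝ≥0∞)
    (H : ∀ x₁ ∈ s1, ∀ x₂ ∈ s2, c ≤ (a : ℝ≥0∞) * S x₁ + (b : ℝ≥0∞) * S x₂) :
    c ≤ (a : ℝ≥0∞) * (⨅ x ∈ s1, S x) + (b : ℝ≥0∞) * (⨅ x ∈ s2, S x) := by
  haveI : Nonempty s1 := h1.to_subtype
  haveI : Nonempty s2 := h2.to_subtype
  rw [← iInf_subtype'' s1 S, ← iInf_subtype'' s2 S]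
  rw [ENNReal.mul_iInf' (fun h => absurd h ENNReal.coe_ne_top) (fun _ => ‹Nonempty s1›),
    ENNReal.mul_iInf' (fun h => absurd h ENNReal.coe_ne_top) (fun _ => ‹Nonempty s2›)]
  rw [ENNReal.iInf_add]
  refine le_iInf fun x₁ => ?_
  rw [ENNReal.add_iInf]
  exact le_iInf fun x₂ => H x₁ x₁.2 x₂ x₂.2

lemma abs_le_exp_add_exp (t : ℝ) : |t| ≤ Real.exp t + Real.exp (-t) := by
  have h1 := Real.add_one_le_exp t
  have h2 := Real.add_one_le_exp (-t)
  have h3 := Real.exp_nonneg t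
  have h4 := Real.exp_nonneg (-t)
  rcases abs_cases t with ⟨h, _⟩ | ⟨h, _⟩ <;> nlinarith

lemma sq_le_exp_add_exp (t : ℝ) : t ^ 2 ≤ 4 * Real.exp t + 4 * Real.exp (-t) := by
  have key : ∀ s : ℝ, 0 ≤ s → s ^ 2 ≤ 4 * Real.exp s := by
    intro s hs
    have h1 : 1 + s / 2 ≤ Real.exp (s / 2) := by
      have := Real.add_one_le_exp (s / 2); linarith
    have h3 : Real.exp (s / 2) * Real.exp (s / 2) = Real.exp s := by
      rw [← Real.exp_add]; ring_nf
    nlinarith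
  have h3 := Real.exp_nonneg t
  have h4 := Real.exp_nonneg (-t)
  rcases le_total 0 t with h | h
  · have := key t h; nlinarith
  · have := key (-t) (by linarith); nlinarith

/-! ### The core quadratic rate function -/

/-- abstract cgf of a Gaussian in diagonalized form -/
def Kfun (e f μ : E2) (te tf : ℝ) (u : E2) : ℝ :=
  ⟪u, μ⟫ + (te * ⟪e, u⟫ ^ 2 + tf * ⟪f, u⟫ ^ 2) / 2

/-- abstract rate function: Legendre transform of `Kfun`, valued in `[0,∞]` -/
def Jfun (e f μ : E2) (te tf : ℝ) (v : E2) : ℝ≥0∞ :=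
  ⨆ u : E2, ENNReal.ofReal (⟪u, v⟫ - Kfun e f μ te tf u)

section Core

variable {e f μ : E2} {te tf : ℝ}

/-- Parseval for the two-element orthonormal system -/
lemma ip (hspan : ∀ v : E2, ⟪e, v⟫ • e + ⟪f, v⟫ • f = v) (v w : E2) :
    ⟪v, w⟫ = ⟪e, v⟫ * ⟪e, w⟫ + ⟪f, v⟫ * ⟪f, w⟫ := by
  conv_lhs => rw [← hspan v]
  rw [inner_add_left, real_inner_smul_left, real_inner_smul_left]

lemma nsq (hspan : ∀ v : E2, ⟪e, v⟫ • e + ⟪f, v⟫ • f = v) (v : E2) :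
    ‖v‖ ^ 2 = ⟪e, v⟫ ^ 2 + ⟪f, v⟫ ^ 2 := by
  rw [← real_inner_self_eq_norm_sq, ip hspan v v]; ring

lemma Jfun_nonneg (v : E2) : (0 : ℝ≥0∞) ≤ Jfun e f μ te tf v := zero_le

lemma Jfun_at_mean (hte : 0 ≤ te) (htf : 0 ≤ tf) : Jfun e f μ te tf μ = 0 := by
  refine le_antisymm (iSup_le fun u => ?_) zero_le
  rw [nonpos_iff_eq_zero, ENNReal.ofReal_eq_zero]
  unfold Kfun
  nlinarith [sq_nonneg ⟪e, u⟫, sq_nonneg ⟪f, u⟫]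

/-- convexity of the rate function -/
lemma Jfun_convex (x y : E2) (a b : ℝ≥0) (hab : (a : ℝ) + (b : ℝ) = 1) :
    Jfun e f μ te tf ((a : ℝ) • x + (b : ℝ) • y) ≤
      (a : ℝ≥0∞) * Jfun e f μ te tf x + (b : ℝ≥0∞) * Jfun e f μ te tf y := by
  refine iSup_le fun u => ?_
  have hkey : ⟪u, (a : ℝ) • x + (b : ℝ) • y⟫ - Kfun e f μ te tf u =
      (a : ℝ) * (⟪u, x⟫ - Kfun e f μ te tf u) + (b : ℝ) * (⟪u, y⟫ - Kfun e f μ te tf u) := by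
    rw [inner_add_right, real_inner_smul_right, real_inner_smul_right]
    have : (a : ℝ) * Kfun e f μ te tf u + (b : ℝ) * Kfun e f μ te tf u
        = Kfun e f μ te tf u := by rw [← add_mul, hab, one_mul]
    ring_nf
    linarith [this]
  rw [hkey]
  refine le_trans (ofReal_combo a b _ _) ?_
  have hx : ENNReal.ofReal (⟪u, x⟫ - Kfun e f μ te tf u) ≤ Jfun e f μ te tf x :=
    le_iSup (fun u => ENNReal.ofReal (⟪u, x⟫ - Kfun e f μ te tf u)) u
  have hy : ENNReal.ofReal (⟪u, y⟫ - Kfun e f μ te tf u) ≤ Jfun e f μ te tf y :=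
    le_iSup (fun u => ENNReal.ofReal (⟪u, y⟫ - Kfun e f μ te tf u)) u
  exact add_le_add (mul_le_mul_right hx _) (mul_le_mul_right hy _)

lemma Jfun_quasi (x y : E2) (t : ℝ) (h0 : 0 ≤ t) (h1 : t ≤ 1) :
    Jfun e f μ te tf ((1 - t) • x + t • y) ≤ max (Jfun e f μ te tf x) (Jfun e f μ te tf y) := by
  set a : ℝ≥0 := ⟨1 - t, by linarith⟩
  set b : ℝ≥0 := ⟨t, h0⟩
  have hax : (a : ℝ) = 1 - t := rfl
  have hbx : (b : ℝ) = t := rfl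
  have hab : (a : ℝ) + (b : ℝ) = 1 := by rw [hax, hbx]; ring
  have h := Jfun_convex (e := e) (f := f) (μ := μ) (te := te) (tf := tf) x y a b hab
  rw [hax, hbx] at h
  refine h.trans ?_
  have habE : (a : ℝ≥0∞) + (b : ℝ≥0∞) = 1 := by
    rw [← ENNReal.coe_add, ← ENNReal.coe_one]
    norm_cast
    have : ((a + b : ℝ≥0) : ℝ) = 1 := by push_cast; rw [hax, hbx]; ring
    exact NNReal.coe_injective (by simpa using this)
  calc (a : ℝ≥0∞) * Jfun e f μ te tf x + (b : ℝ≥0∞) * Jfun e f μ te tf y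
      ≤ (a : ℝ≥0∞) * max (Jfun e f μ te tf x) (Jfun e f μ te tf y)
        + (b : ℝ≥0∞) * max (Jfun e f μ te tf x) (Jfun e f μ te tf y) :=
        add_le_add (mul_le_mul_right (le_max_left _ _) _) (mul_le_mul_right (le_max_right _ _) _)
    _ = ((a : ℝ≥0∞) + (b : ℝ≥0∞)) * max (Jfun e f μ te tf x) (Jfun e f μ te tf y) := by
        rw [add_mul]
    _ = _ := by rw [habE, one_mul]

/-! ### Certificate inequalities -/

lemma Jfun_le_cert (hspan : ∀ v : E2, ⟪e, v⟫ • e + ⟪f, v⟫ • f = v)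
    (hte : 0 ≤ te) (htf : 0 ≤ tf) {l : ℝ} {xh : E2}
    (hfe : (1 - l * te) * ⟪e, xh⟫ = ⟪e, μ⟫) (hff' : (1 - l * tf) * ⟪f, xh⟫ = ⟪f, μ⟫) :
    Jfun e f μ te tf xh ≤ ENNReal.ofReal ((l / 2) * (‖xh‖ ^ 2 - ⟪xh, μ⟫)) := by
  refine iSup_le fun u => ENNReal.ofReal_le_ofReal ?_
  have h1 := ip hspan u xh
  have h2 := ip hspan u μ
  have h3 := ip hspan xh μ
  have h4 := nsq hspan xh
  have hμe : ⟪e, μ⟫ = (1 - l * te) * ⟪e, xh⟫ := hfe.symm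
  have hμf : ⟪f, μ⟫ = (1 - l * tf) * ⟪f, xh⟫ := hff'.symm
  unfold Kfun
  rw [h1, h2, h3, h4, hμe, hμf]
  nlinarith [mul_nonneg hte (sq_nonneg (⟪e, u⟫ - l * ⟪e, xh⟫)),
    mul_nonneg htf (sq_nonneg (⟪f, u⟫ - l * ⟪f, xh⟫))]

lemma line_le_Jfun (hspan : ∀ v : E2, ⟪e, v⟫ • e + ⟪f, v⟫ • f = v)
    {l : ℝ} {xh : E2} (hl : 0 ≤ l) (hlte : l * te ≤ 1) (hltf : l * tf ≤ 1)
    (hfe : (1 - l * te) * ⟪e, xh⟫ = ⟪e, μ⟫) (hff' : (1 - l * tf) * ⟪f, xh⟫ = ⟪f, μ⟫)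
    (x : E2) :
    ENNReal.ofReal ((l / 2) * (‖x‖ ^ 2 - ⟪xh, μ⟫)) ≤ Jfun e f μ te tf x := by
  have hstep : ENNReal.ofReal (⟪l • x, x⟫ - Kfun e f μ te tf (l • x)) ≤ Jfun e f μ te tf x :=
    le_iSup (fun u => ENNReal.ofReal (⟪u, x⟫ - Kfun e f μ te tf u)) (l • x)
  refine le_trans (ENNReal.ofReal_le_ofReal ?_) hstep
  have h3 := ip hspan xh μ
  have h4 := nsq hspan x
  have h5 := ip hspan x μ
  have hμe : ⟪e, μ⟫ = (1 - l * te) * ⟪e, xh⟫ := hfe.symm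
  have hμf : ⟪f, μ⟫ = (1 - l * tf) * ⟪f, xh⟫ := hff'.symm
  unfold Kfun
  rw [real_inner_smul_left, real_inner_smul_left, real_inner_smul_right,
    real_inner_smul_right, real_inner_self_eq_norm_sq]
  rw [h3, h4, h5, hμe, hμf]
  nlinarith [mul_nonneg (mul_nonneg hl (sub_nonneg.2 hlte)) (sq_nonneg (⟪e, x⟫ - ⟪e, xh⟫)),
    mul_nonneg (mul_nonneg hl (sub_nonneg.2 hltf)) (sq_nonneg (⟪f, x⟫ - ⟪f, xh⟫))]

/-- in the totally degenerate case the rate function is `⊤` away from the mean -/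
lemma Jfun_top (hspan : ∀ v : E2, ⟪e, v⟫ • e + ⟪f, v⟫ • f = v)
    (hte0 : te = 0) (htf0 : tf = 0) {x : E2} (hx : x ≠ μ) :
    Jfun e f μ te tf x = ⊤ := by
  apply ENNReal.eq_top_of_forall_nnreal_le
  intro r
  have hxμ : (0:ℝ) < ‖x - μ‖ ^ 2 :=
    pow_pos (norm_pos_iff.2 (sub_ne_zero.2 hx)) 2
  set t : ℝ := r / ‖x - μ‖ ^ 2 with ht
  have hval : ⟪t • (x - μ), x⟫ - Kfun e f μ te tf (t • (x - μ)) = r := by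
    unfold Kfun
    rw [hte0, htf0]
    rw [real_inner_smul_left, real_inner_smul_left]
    have hh : ⟪x - μ, x⟫ - ⟪x - μ, μ⟫ = ‖x - μ‖ ^ 2 := by
      rw [← inner_sub_right, ← real_inner_self_eq_norm_sq]
    have hthis : t * ‖x - μ‖ ^ 2 = r := by
      rw [ht]; exact div_mul_cancel₀ _ hxμ.ne'
    linear_combination t * hh + hthis
  have hle : (r : ℝ≥0∞) ≤ ENNReal.ofReal (⟪t • (x - μ), x⟫ - Kfun e f μ te tf (t • (x - μ))) := by
    rw [hval, ← ENNReal.ofReal_coe_nnreal]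
  exact hle.trans (le_iSup (fun u => ENNReal.ofReal (⟪u, x⟫ - Kfun e f μ te tf u)) _)

/-! ### inner and outer radial minima -/

end Core

def gI (S : E2 → ℝ≥0∞) (r : ℝ) : ℝ≥0∞ := ⨅ x ∈ {x : E2 | ‖x‖ ≤ r}, S x

def hI (S : E2 → ℝ≥0∞) (r : ℝ) : ℝ≥0∞ := ⨅ x ∈ {x : E2 | r ≤ ‖x‖}, S x

lemma hI_mono (S : E2 → ℝ≥0∞) {r1 r2 : ℝ} (h : r1 ≤ r2) : hI S r1 ≤ hI S r2 :=
  biInf_mono fun _ hx => le_trans h hx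

lemma ball_ne {r : ℝ} (hr : 0 ≤ r) : ({x : E2 | ‖x‖ ≤ r}).Nonempty :=
  ⟨0, by simp [hr]⟩

lemma norm_eq_one_of_inner {e : E2} (hee : ⟪e, e⟫ = 1) : ‖e‖ = 1 := by
  have h : ‖e‖ ^ 2 = 1 ^ 2 := by rw [← real_inner_self_eq_norm_sq, hee]; norm_num
  exact eq_of_sq_eq_sq (norm_nonneg e) zero_le_one h

lemma outer_ne {e : E2} (he1 : ‖e‖ = 1) (r : ℝ) : ({x : E2 | r ≤ ‖x‖}).Nonempty := by
  refine ⟨(max r 0) • e, ?_⟩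
  simp only [mem_setOf_eq, norm_smul, he1, mul_one, Real.norm_eq_abs]
  rw [abs_of_nonneg (le_max_right r 0)]
  exact le_max_left r 0

lemma sphere_inf_eq {e : E2} (he1 : ‖e‖ = 1) (S : E2 → ℝ≥0∞) {z : ℝ} (hz : 0 ≤ z) :
    (⨅ ℓ ∈ {ℓ : E2 | ‖ℓ‖ = 1}, S (z • ℓ)) = ⨅ x ∈ {x : E2 | ‖x‖ = z}, S x := by
  apply le_antisymm
  · refine le_iInf₂ fun x hx => ?_
    have hx' : ‖x‖ = z := hx
    rcases eq_or_ne z 0 with rfl | hz0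
    · have hx0 : x = 0 := norm_eq_zero.1 hx'
      refine iInf₂_le_of_le e he1 (le_of_eq ?_)
      rw [hx0, zero_smul]
    · refine iInf₂_le_of_le (z⁻¹ • x) ?_ (le_of_eq ?_)
      · show ‖z⁻¹ • x‖ = 1
        rw [norm_smul, Real.norm_eq_abs, hx', abs_inv, abs_of_nonneg hz, inv_mul_cancel₀ hz0]
      · rw [smul_smul, mul_inv_cancel₀ hz0, one_smul]
  · refine le_iInf₂ fun ℓ hℓ => ?_
    have hℓ' : ‖ℓ‖ = 1 := hℓ
    refine iInf₂_le (z • ℓ) ?_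
    show ‖z • ℓ‖ = z
    rw [norm_smul, Real.norm_eq_abs, hℓ', mul_one, abs_of_nonneg hz]

lemma rm_eq {e : E2} (he1 : ‖e‖ = 1) (S : E2 → ℝ≥0∞)
    (hquasi : ∀ x y : E2, ∀ t : ℝ, 0 ≤ t → t ≤ 1 →
      S ((1 - t) • x + t • y) ≤ max (S x) (S y))
    {z : ℝ} (hz : 0 ≤ z) :
    (⨅ ℓ ∈ {ℓ : E2 | ‖ℓ‖ = 1}, S (z • ℓ)) = max (gI S z) (hI S z) := by
  rw [sphere_inf_eq he1 S hz]
  apply le_antisymm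
  · by_contra hlt
    push_neg at hlt
    have hg : gI S z < ⨅ x ∈ {x : E2 | ‖x‖ = z}, S x :=
      lt_of_le_of_lt (le_max_left _ _) hlt
    have hh : hI S z < ⨅ x ∈ {x : E2 | ‖x‖ = z}, S x :=
      lt_of_le_of_lt (le_max_right _ _) hlt
    obtain ⟨x₁, hx₁⟩ := iInf_lt_iff.1 hg
    obtain ⟨hm₁, hS₁⟩ := iInf_lt_iff.1 hx₁
    obtain ⟨x₂, hx₂⟩ := iInf_lt_iff.1 hh
    obtain ⟨hm₂, hS₂⟩ := iInf_lt_iff.1 hx₂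
    have hm₁' : ‖x₁‖ ≤ z := hm₁
    have hm₂' : z ≤ ‖x₂‖ := hm₂
    have hcont : ContinuousOn (fun t : ℝ => ‖x₁ + t • (x₂ - x₁)‖) (Icc 0 1) :=
      (Continuous.norm (by continuity)).continuousOn
    have hmem : z ∈ Icc (‖x₁ + (0 : ℝ) • (x₂ - x₁)‖) (‖x₁ + (1 : ℝ) • (x₂ - x₁)‖) := by
      simp only [zero_smul, add_zero, one_smul]
      rw [add_sub_cancel]
      exact ⟨hm₁', hm₂'⟩
    obtain ⟨t, ht, hteq⟩ := intermediate_value_Icc zero_le_one hcont hmem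
    have hrepr : x₁ + t • (x₂ - x₁) = (1 - t) • x₁ + t • x₂ := by module
    have h1 : S (x₁ + t • (x₂ - x₁)) ≤ max (S x₁) (S x₂) := by
      rw [hrepr]; exact hquasi _ _ t ht.1 ht.2
    have hptmem : x₁ + t • (x₂ - x₁) ∈ {x : E2 | ‖x‖ = z} := hteq
    have h2 : (⨅ x ∈ {x : E2 | ‖x‖ = z}, S x) ≤ S (x₁ + t • (x₂ - x₁)) :=
      iInf_le_of_le (x₁ + t • (x₂ - x₁)) (iInf_le_of_le hptmem le_rfl)
    exact absurd (h2.trans h1) (not_le.2 (max_lt hS₁ hS₂))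
  · refine max_le (biInf_mono fun x hx => le_of_eq hx) (biInf_mono fun x hx => ge_of_eq hx)

/-! ### convexity of the inner minimum -/

lemma g_convex (S : E2 → ℝ≥0∞)
    (hconv : ∀ x y : E2, ∀ a b : ℝ≥0, (a : ℝ) + (b : ℝ) = 1 →
      S ((a : ℝ) • x + (b : ℝ) • y) ≤ (a : ℝ≥0∞) * S x + (b : ℝ≥0∞) * S y)
    {r1 r2 : ℝ} (hr1 : 0 ≤ r1) (hr2 : 0 ≤ r2) (a b : ℝ≥0) (hab : (a : ℝ) + (b : ℝ) = 1) :
    gI S ((a : ℝ) * r1 + (b : ℝ) * r2) ≤ (a : ℝ≥0∞) * gI S r1 + (b : ℝ≥0∞) * gI S r2 := by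
  refine combo_le (ball_ne hr1) (ball_ne hr2) S a b _ (fun x₁ h₁ x₂ h₂ => ?_)
  have h₁' : ‖x₁‖ ≤ r1 := h₁
  have h₂' : ‖x₂‖ ≤ r2 := h₂
  have hmem : (a : ℝ) • x₁ + (b : ℝ) • x₂ ∈ {x : E2 | ‖x‖ ≤ (a : ℝ) * r1 + (b : ℝ) * r2} := by
    have e1 : ‖(a : ℝ) • x₁ + (b : ℝ) • x₂‖ ≤ (a : ℝ) * ‖x₁‖ + (b : ℝ) * ‖x₂‖ := by
      refine le_trans (norm_add_le _ _) ?_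
      rw [norm_smul, norm_smul, Real.norm_eq_abs, Real.norm_eq_abs,
        abs_of_nonneg a.coe_nonneg, abs_of_nonneg b.coe_nonneg]
    have e2 : (a : ℝ) * ‖x₁‖ + (b : ℝ) * ‖x₂‖ ≤ (a : ℝ) * r1 + (b : ℝ) * r2 :=
      add_le_add (mul_le_mul_of_nonneg_left h₁' a.coe_nonneg)
        (mul_le_mul_of_nonneg_left h₂' b.coe_nonneg)
    exact le_trans e1 e2
  exact le_trans (iInf_le_of_le _ (iInf_le_of_le hmem le_rfl)) (hconv x₁ x₂ a b hab)

/-! ### existence of dual certificates -/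

section Exist

variable {e f μ : E2} {te tf : ℝ}

lemma exist_A (hee : ⟪e, e⟫ = 1) (hff : ⟪f, f⟫ = 1) (hef : ⟪e, f⟫ = 0)
    (hspan : ∀ v : E2, ⟪e, v⟫ • e + ⟪f, v⟫ • f = v) (htf0 : 0 ≤ tf)
    (hm : ⟪e, μ⟫ ≠ 0) (hte : 0 < te) (h01 : tf ≤ te) {r : ℝ} (hr : ‖μ‖ ≤ r) :
    ∃ l xh, 0 ≤ l ∧ l * te ≤ 1 ∧ l * tf ≤ 1 ∧
      (1 - l * te) * ⟪e, xh⟫ = ⟪e, μ⟫ ∧ (1 - l * tf) * ⟪f, xh⟫ = ⟪f, μ⟫ ∧ ‖xh‖ = r := by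
  have hfe : ⟪f, e⟫ = 0 := by rw [real_inner_comm]; exact hef
  set m0 : ℝ := ⟪e, μ⟫ with hm0def
  set m1 : ℝ := ⟪f, μ⟫ with hm1def
  have hr0 : 0 ≤ r := le_trans (norm_nonneg μ) hr
  have hrp : (0 : ℝ) < r + 1 := by linarith
  have hm0abs : |m0| ≤ ‖μ‖ := by
    have h := abs_real_inner_le_norm e μ
    rwa [norm_eq_one_of_inner hee, one_mul] at h
  set δ : ℝ := |m0| / (r + 1) with hδdef
  have hδpos : 0 < δ := div_pos (abs_pos.2 hm) hrp
  have hδlt : δ < 1 := by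
    rw [hδdef, div_lt_one hrp]
    have := abs_nonneg m0
    linarith
  set l1 : ℝ := (1 - δ) / te with hl1def
  have hl1 : 0 ≤ l1 := div_nonneg (by linarith) hte.le
  have hl1te : l1 * te = 1 - δ := by
    rw [hl1def]; field_simp
  have hden : ∀ l ∈ Icc (0 : ℝ) l1, δ ≤ 1 - l * te ∧ δ ≤ 1 - l * tf := by
    intro l hl
    have h1 : l * te ≤ 1 - δ := by
      calc l * te ≤ l1 * te := mul_le_mul_of_nonneg_right hl.2 hte.le
        _ = 1 - δ := hl1te
    have h2 : l * tf ≤ l * te := mul_le_mul_of_nonneg_left h01 hl.1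
    exact ⟨by linarith, by linarith⟩
  set N : ℝ → ℝ := fun l => (m0 / (1 - l * te)) ^ 2 + (m1 / (1 - l * tf)) ^ 2 with hNdef
  have hNcont : ContinuousOn N (Icc 0 l1) := by
    apply ContinuousOn.add
    · apply ContinuousOn.pow
      apply ContinuousOn.div continuousOn_const
      · exact (continuous_const.sub (continuous_id.mul continuous_const)).continuousOn
      · intro l hl
        have := (hden l hl).1
        linarith
    · apply ContinuousOn.pow
      apply ContinuousOn.div continuousOn_const
      · exact (continuous_const.sub (continuous_id.mul continuous_const)).continuousOn
      · intro l hl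
        have := (hden l hl).2
        linarith
  have hN0 : N 0 = ‖μ‖ ^ 2 := by
    rw [hNdef]
    simp only [zero_mul, sub_zero, div_one]
    rw [nsq hspan μ]
  have hNl1 : r ^ 2 ≤ N l1 := by
    have h1 : 1 - l1 * te = δ := by rw [hl1te]; ring
    have h2 : (m0 / δ) ^ 2 = (r + 1) ^ 2 := by
      rw [hδdef, div_pow, div_pow, ← sq_abs m0]
      field_simp
    have h3 : (m0 / (1 - l1 * te)) ^ 2 = (r + 1) ^ 2 := by rw [h1, h2]
    calc r ^ 2 ≤ (r + 1) ^ 2 := by nlinarith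
      _ = (m0 / (1 - l1 * te)) ^ 2 := h3.symm
      _ ≤ N l1 := le_add_of_nonneg_right (sq_nonneg _)
  have hsub : r ^ 2 ∈ Icc (N 0) (N l1) := by
    constructor
    · rw [hN0]
      nlinarith [norm_nonneg μ]
    · exact hNl1
  obtain ⟨l, hlmem, hNl⟩ := intermediate_value_Icc hl1 hNcont hsub
  obtain ⟨hd1, hd2⟩ := hden l hlmem
  have hd1' : (0 : ℝ) < 1 - l * te := lt_of_lt_of_le hδpos hd1
  have hd2' : (0 : ℝ) < 1 - l * tf := lt_of_lt_of_le hδpos hd2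
  set ce : ℝ := m0 / (1 - l * te) with hcedef
  set cf : ℝ := m1 / (1 - l * tf) with hcfdef
  have hipe : ⟪e, ce • e + cf • f⟫ = ce := by
    rw [inner_add_right, real_inner_smul_right, real_inner_smul_right, hee, hef]; ring
  have hipf : ⟪f, ce • e + cf • f⟫ = cf := by
    rw [inner_add_right, real_inner_smul_right, real_inner_smul_right, hfe, hff]; ring
  refine ⟨l, ce • e + cf • f, hlmem.1, by linarith, by linarith, ?_, ?_, ?_⟩
  · rw [hipe, hcedef]
    field_simp
  · rw [hipf, hcfdef]
    field_simp
  · apply eq_of_sq_eq_sq (norm_nonneg _) hr0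
    rw [nsq hspan, hipe, hipf]
    exact hNl
lemma exist_B (hee : ⟪e, e⟫ = 1) (hff : ⟪f, f⟫ = 1) (hef : ⟪e, f⟫ = 0)
    (hspan : ∀ v : E2, ⟪e, v⟫ • e + ⟪f, v⟫ • f = v) (htf0 : 0 ≤ tf)
    (hm0 : ⟪e, μ⟫ = 0) (hte : 0 < te) (h01 : tf ≤ te)
    (hB : tf = te → ⟪f, μ⟫ = 0) {r : ℝ} (hr : ‖μ‖ ≤ r) :
    ∃ l xh, 0 ≤ l ∧ l * te ≤ 1 ∧ l * tf ≤ 1 ∧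
      (1 - l * te) * ⟪e, xh⟫ = ⟪e, μ⟫ ∧ (1 - l * tf) * ⟪f, xh⟫ = ⟪f, μ⟫ ∧ ‖xh‖ = r := by
  have hfe : ⟪f, e⟫ = 0 := by rw [real_inner_comm]; exact hef
  set m1 : ℝ := ⟪f, μ⟫ with hm1def
  have hr0 : 0 ≤ r := le_trans (norm_nonneg μ) hr
  set d : ℝ := 1 - tf / te with hddef
  have htfte : tf / te ≤ 1 := (div_le_one hte).2 h01
  have hd0 : 0 ≤ d := by rw [hddef]; linarith
  set c1 : ℝ := m1 / d with hc1def
  have hinvte : (1 : ℝ) / te * te = 1 := by field_simp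
  have hinvtf : (1 : ℝ) / te * tf = tf / te := by ring
  by_cases hcase : c1 ^ 2 ≤ r ^ 2
  · -- hard-case ray solution at l = 1/te
    set t0 : ℝ := Real.sqrt (r ^ 2 - c1 ^ 2) with ht0def
    have ht0sq : t0 ^ 2 = r ^ 2 - c1 ^ 2 := Real.sq_sqrt (by linarith)
    have hipe : ⟪e, c1 • f + t0 • e⟫ = t0 := by
      rw [inner_add_right, real_inner_smul_right, real_inner_smul_right, hee, hef]; ring
    have hipf : ⟪f, c1 • f + t0 • e⟫ = c1 := by
      rw [inner_add_right, real_inner_smul_right, real_inner_smul_right, hfe, hff]; ring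
    refine ⟨1 / te, c1 • f + t0 • e, by positivity, le_of_eq hinvte, ?_, ?_, ?_, ?_⟩
    · rw [hinvtf]; exact htfte
    · rw [hipe, hinvte, sub_self, zero_mul]
      exact hm0.symm
    · rw [hipf, hinvtf]
      by_cases hd : d = 0
      · have htfeq : tf = te := by
          have : tf / te = 1 := by rw [hddef] at hd; linarith
          field_simp at this
          linarith
        have hm1z : m1 = 0 := hB htfeq
        rw [show (1 : ℝ) - tf / te = d from hddef.symm, hd, zero_mul]
        exact hm1z.symm
      · rw [show (1 : ℝ) - tf / te = d from hddef.symm, hc1def]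
        field_simp
    · apply eq_of_sq_eq_sq (norm_nonneg _) hr0
      rw [nsq hspan, hipe, hipf, ht0sq]
      ring
  · -- IVT branch
    push_neg at hcase
    have hc1ne : c1 ≠ 0 := by
      intro h
      rw [h] at hcase
      nlinarith
    have hdne : d ≠ 0 := by
      intro h
      rw [hc1def, h, div_zero] at hc1ne
      exact hc1ne rfl
    have hm1ne : m1 ≠ 0 := by
      intro h
      rw [hc1def, h, zero_div] at hc1ne
      exact hc1ne rfl
    have hdpos : 0 < d := lt_of_le_of_ne hd0 (Ne.symm hdne)
    have hden : ∀ l ∈ Icc (0 : ℝ) (1 / te), d ≤ 1 - l * tf := by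
      intro l hl
      have h1 : l * tf ≤ (1 / te) * tf := mul_le_mul_of_nonneg_right hl.2 htf0
      rw [hinvtf] at h1
      rw [hddef]
      linarith
    set N : ℝ → ℝ := fun l => (m1 / (1 - l * tf)) ^ 2 with hNdef
    have hNcont : ContinuousOn N (Icc 0 (1 / te)) := by
      apply ContinuousOn.pow
      apply ContinuousOn.div continuousOn_const
      · exact (continuous_const.sub (continuous_id.mul continuous_const)).continuousOn
      · intro l hl
        have := hden l hl
        linarith
    have hN0 : N 0 = ‖μ‖ ^ 2 := by
      rw [hNdef]
      simp only [zero_mul, sub_zero, div_one]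
      rw [nsq hspan μ, ← hm1def, hm0]
      ring
    have hNend : N (1 / te) = c1 ^ 2 := by
      rw [hNdef]
      simp only
      rw [hinvtf, show (1 : ℝ) - tf / te = d from hddef.symm, hc1def]
    have hsub : r ^ 2 ∈ Icc (N 0) (N (1 / te)) := by
      constructor
      · rw [hN0]; nlinarith [norm_nonneg μ]
      · rw [hNend]; linarith
    obtain ⟨l, hlmem, hNl⟩ := intermediate_value_Icc (by positivity) hNcont hsub
    have hd1 := hden l hlmem
    have hd1' : (0 : ℝ) < 1 - l * tf := lt_of_lt_of_le hdpos hd1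
    have hlte : l * te ≤ 1 := by
      have h2 : l * te ≤ (1 / te) * te := mul_le_mul_of_nonneg_right hlmem.2 hte.le
      rwa [hinvte] at h2
    have hltf : l * tf ≤ 1 := by
      have := mul_le_mul_of_nonneg_left h01 hlmem.1
      linarith
    set cf : ℝ := m1 / (1 - l * tf) with hcfdef
    have hipe : ⟪e, cf • f⟫ = 0 := by
      rw [real_inner_smul_right, hef, mul_zero]
    have hipf : ⟪f, cf • f⟫ = cf := by
      rw [real_inner_smul_right, hff, mul_one]
    refine ⟨l, cf • f, hlmem.1, hlte, hltf, ?_, ?_, ?_⟩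
    · rw [hipe, mul_zero]; exact hm0.symm
    · rw [hipf, hcfdef]; field_simp
    · apply eq_of_sq_eq_sq (norm_nonneg _) hr0
      rw [nsq hspan, hipe, hipf]
      have hz : (0 : ℝ) ^ 2 + cf ^ 2 = cf ^ 2 := by ring
      rw [hz]
      exact hNl
lemma exist_cert (hee : ⟪e, e⟫ = 1) (hff : ⟪f, f⟫ = 1) (hef : ⟪e, f⟫ = 0)
    (hspan : ∀ v : E2, ⟪e, v⟫ • e + ⟪f, v⟫ • f = v) (hte0 : 0 ≤ te) (htf0 : 0 ≤ tf)
    (hmax : 0 < te ∨ 0 < tf) {r : ℝ} (hr : ‖μ‖ ≤ r) :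
    ∃ l xh, 0 ≤ l ∧ l * te ≤ 1 ∧ l * tf ≤ 1 ∧
      (1 - l * te) * ⟪e, xh⟫ = ⟪e, μ⟫ ∧ (1 - l * tf) * ⟪f, xh⟫ = ⟪f, μ⟫ ∧ ‖xh‖ = r := by
  have hfe : ⟪f, e⟫ = 0 := by rw [real_inner_comm]; exact hef
  have hspan' : ∀ v : E2, ⟪f, v⟫ • f + ⟪e, v⟫ • e = v := fun v => by
    rw [add_comm]; exact hspan v
  rcases le_total tf te with h01 | h01
  · have htep : 0 < te := by
      rcases hmax with h | h
      · exact h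
      · linarith
    by_cases hm0 : ⟪e, μ⟫ = 0
    · by_cases hc : tf = te ∧ ⟪f, μ⟫ ≠ 0
      · obtain ⟨l, xh, c1, c2, c3, c4, c5, c6⟩ :=
          exist_A (e := f) (f := e) (μ := μ) (te := tf) (tf := te)
            hff hee hfe hspan' hte0 hc.2 (hc.1 ▸ htep) hc.1.ge hr
        exact ⟨l, xh, c1, c3, c2, c5, c4, c6⟩
      · refine exist_B hee hff hef hspan htf0 hm0 htep h01 ?_ hr
        intro h
        by_contra hne
        exact hc ⟨h, hne⟩
    · exact exist_A hee hff hef hspan htf0 hm0 htep h01 hr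
  · have htfp : 0 < tf := by
      rcases hmax with h | h
      · linarith
      · exact h
    by_cases hm0 : ⟪f, μ⟫ = 0
    · by_cases hc : te = tf ∧ ⟪e, μ⟫ ≠ 0
      · exact exist_A hee hff hef hspan htf0 hc.2 (hc.1 ▸ htfp) hc.1.ge hr
      · obtain ⟨l, xh, c1, c2, c3, c4, c5, c6⟩ :=
          exist_B (e := f) (f := e) (μ := μ) (te := tf) (tf := te)
            hff hee hfe hspan' hte0 hm0 htfp h01
            (fun h => by
              by_contra hne
              exact hc ⟨h, hne⟩) hr
        exact ⟨l, xh, c1, c3, c2, c5, c4, c6⟩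
    · obtain ⟨l, xh, c1, c2, c3, c4, c5, c6⟩ :=
        exist_A (e := f) (f := e) (μ := μ) (te := tf) (tf := te)
          hff hee hfe hspan' hte0 hm0 htfp h01 hr
      exact ⟨l, xh, c1, c3, c2, c5, c4, c6⟩

/-! ### convexity of the outer minimum -/

set_option maxHeartbeats 1000000 in
lemma h_convex (hee : ⟪e, e⟫ = 1) (hff : ⟪f, f⟫ = 1) (hef : ⟪e, f⟫ = 0)
    (hspan : ∀ v : E2, ⟪e, v⟫ • e + ⟪f, v⟫ • f = v) (hte0 : 0 ≤ te) (htf0 : 0 ≤ tf)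
    {r1 r2 : ℝ} (hr1 : 0 ≤ r1) (hr2 : 0 ≤ r2) (a b : ℝ≥0) (hab : (a : ℝ) + (b : ℝ) = 1) :
    hI (Jfun e f μ te tf) ((a : ℝ) * r1 + (b : ℝ) * r2) ≤
      (a : ℝ≥0∞) * hI (Jfun e f μ te tf) r1 + (b : ℝ≥0∞) * hI (Jfun e f μ te tf) r2 := by
  by_cases ha0 : a = 0
  · have hb1 : (b : ℝ) = 1 := by rw [ha0] at hab; simpa using hab
    have hbE : (b : ℝ≥0∞) = 1 := by
      have : b = 1 := by
        apply NNReal.coe_injective; simpa using hb1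
      rw [this, ENNReal.coe_one]
    rw [ha0, hb1, hbE]
    simp
  by_cases hb0 : b = 0
  · have ha1 : (a : ℝ) = 1 := by rw [hb0] at hab; simpa using hab
    have haE : (a : ℝ≥0∞) = 1 := by
      have : a = 1 := by
        apply NNReal.coe_injective; simpa using ha1
      rw [this, ENNReal.coe_one]
    rw [hb0, ha1, haE]
    simp
  set rb : ℝ := (a : ℝ) * r1 + (b : ℝ) * r2 with hrbdef
  have hrb0 : 0 ≤ rb := by positivity
  by_cases hμr : rb ≤ ‖μ‖
  · have h1 : hI (Jfun e f μ te tf) rb ≤ Jfun e f μ te tf μ :=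
      iInf_le_of_le μ (iInf_le_of_le hμr le_rfl)
    rw [Jfun_at_mean hte0 htf0] at h1
    exact le_trans h1 zero_le
  push_neg at hμr
  by_cases hmax : 0 < te ∨ 0 < tf
  · obtain ⟨l, xh, hl0, hlte, hltf, hfix1, hfix2, hnorm⟩ :=
      exist_cert hee hff hef hspan hte0 htf0 hmax hμr.le
    have hl2 : (0 : ℝ) ≤ l / 2 := by linarith
    have step1 : hI (Jfun e f μ te tf) rb ≤ Jfun e f μ te tf xh :=
      iInf_le_of_le xh (iInf_le_of_le (ge_of_eq hnorm) le_rfl)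
    have step2 : Jfun e f μ te tf xh ≤
        ENNReal.ofReal ((l / 2) * (‖xh‖ ^ 2 - ⟪xh, μ⟫)) :=
      Jfun_le_cert hspan hte0 htf0 hfix1 hfix2
    have hsq : rb ^ 2 ≤ (a : ℝ) * r1 ^ 2 + (b : ℝ) * r2 ^ 2 := by
      rw [hrbdef]
      nlinarith [sq_nonneg (r1 - r2), a.coe_nonneg, b.coe_nonneg,
        mul_nonneg a.coe_nonneg b.coe_nonneg]
    have step3 : (l / 2) * (‖xh‖ ^ 2 - ⟪xh, μ⟫) ≤
        (a : ℝ) * ((l / 2) * (r1 ^ 2 - ⟪xh, μ⟫)) + (b : ℝ) * ((l / 2) * (r2 ^ 2 - ⟪xh, μ⟫)) := by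
      rw [hnorm]
      have he2 : (l / 2) * rb ^ 2 ≤ (l / 2) * ((a : ℝ) * r1 ^ 2 + (b : ℝ) * r2 ^ 2) :=
        mul_le_mul_of_nonneg_left hsq hl2
      have expand : (a : ℝ) * ((l / 2) * (r1 ^ 2 - ⟪xh, μ⟫))
            + (b : ℝ) * ((l / 2) * (r2 ^ 2 - ⟪xh, μ⟫))
          = (l / 2) * ((a : ℝ) * r1 ^ 2 + (b : ℝ) * r2 ^ 2) - (l / 2) * ⟪xh, μ⟫ := by
        linear_combination (-(l / 2) * ⟪xh, μ⟫) * hab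
      rw [expand]
      linarith [he2]
    have step5 : ENNReal.ofReal ((l / 2) * (r1 ^ 2 - ⟪xh, μ⟫)) ≤ hI (Jfun e f μ te tf) r1 := by
      refine le_iInf fun x => le_iInf fun hx => ?_
      have hx' : r1 ≤ ‖x‖ := hx
      refine le_trans (ENNReal.ofReal_le_ofReal ?_) (line_le_Jfun hspan hl0 hlte hltf hfix1 hfix2 x)
      have hsq2 : r1 ^ 2 ≤ ‖x‖ ^ 2 := pow_le_pow_left₀ hr1 hx' 2
      exact mul_le_mul_of_nonneg_left (by linarith) hl2
    have step6 : ENNReal.ofReal ((l / 2) * (r2 ^ 2 - ⟪xh, μ⟫)) ≤ hI (Jfun e f μ te tf) r2 := by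
      refine le_iInf fun x => le_iInf fun hx => ?_
      have hx' : r2 ≤ ‖x‖ := hx
      refine le_trans (ENNReal.ofReal_le_ofReal ?_) (line_le_Jfun hspan hl0 hlte hltf hfix1 hfix2 x)
      have hsq2 : r2 ^ 2 ≤ ‖x‖ ^ 2 := pow_le_pow_left₀ hr2 hx' 2
      exact mul_le_mul_of_nonneg_left (by linarith) hl2
    calc hI (Jfun e f μ te tf) rb
        ≤ ENNReal.ofReal ((l / 2) * (‖xh‖ ^ 2 - ⟪xh, μ⟫)) := step1.trans step2
      _ ≤ ENNReal.ofReal ((a : ℝ) * ((l / 2) * (r1 ^ 2 - ⟪xh, μ⟫))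
            + (b : ℝ) * ((l / 2) * (r2 ^ 2 - ⟪xh, μ⟫))) := ENNReal.ofReal_le_ofReal step3
      _ ≤ (a : ℝ≥0∞) * ENNReal.ofReal ((l / 2) * (r1 ^ 2 - ⟪xh, μ⟫))
            + (b : ℝ≥0∞) * ENNReal.ofReal ((l / 2) * (r2 ^ 2 - ⟪xh, μ⟫)) := ofReal_combo a b _ _
      _ ≤ (a : ℝ≥0∞) * hI (Jfun e f μ te tf) r1 + (b : ℝ≥0∞) * hI (Jfun e f μ te tf) r2 :=
          add_le_add (mul_le_mul_right step5 _) (mul_le_mul_right step6 _)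
  · push_neg at hmax
    have hte' : te = 0 := le_antisymm hmax.1 hte0
    have htf' : tf = 0 := le_antisymm hmax.2 htf0
    rcases le_total r1 r2 with h12 | h12
    · have hrb2 : rb ≤ r2 := by
        rw [hrbdef]
        nlinarith [a.coe_nonneg, b.coe_nonneg]
      have hr2big : ‖μ‖ < r2 := lt_of_lt_of_le hμr hrb2
      have htop : hI (Jfun e f μ te tf) r2 = ⊤ := by
        rw [eq_top_iff]
        refine le_iInf fun x => le_iInf fun hx => ?_
        have hx' : r2 ≤ ‖x‖ := hx
        have hxne : x ≠ μ := by
          intro h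
          rw [h] at hx'
          exact absurd hx' (not_le.2 hr2big)
        exact (Jfun_top hspan hte' htf' hxne).ge
      rw [htop, ENNReal.mul_top (by exact_mod_cast hb0 : (b : ℝ≥0∞) ≠ 0), add_top]
      exact le_top
    · have hrb1 : rb ≤ r1 := by
        rw [hrbdef]
        nlinarith [a.coe_nonneg, b.coe_nonneg]
      have hr1big : ‖μ‖ < r1 := lt_of_lt_of_le hμr hrb1
      have htop : hI (Jfun e f μ te tf) r1 = ⊤ := by
        rw [eq_top_iff]
        refine le_iInf fun x => le_iInf fun hx => ?_
        have hx' : r1 ≤ ‖x‖ := hx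
        have hxne : x ≠ μ := by
          intro h
          rw [h] at hx'
          exact absurd hx' (not_le.2 hr1big)
        exact (Jfun_top hspan hte' htf' hxne).ge
      rw [htop, ENNReal.mul_top (by exact_mod_cast ha0 : (a : ℝ≥0∞) ≠ 0), top_add]
      exact le_top

end Exist

set_option maxHeartbeats 1000000 in
theorem core_main (e f μ : E2) (te tf : ℝ) (hte0 : 0 ≤ te) (htf0 : 0 ≤ tf)
    (hee : ⟪e, e⟫ = 1) (hff : ⟪f, f⟫ = 1) (hef : ⟪e, f⟫ = 0)
    (hspan : ∀ v : E2, ⟪e, v⟫ • e + ⟪f, v⟫ • f = v) :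
    ENNConvexOn Set.univ
      (fun r => if r < 0 then ⊤ else ⨅ ℓ ∈ {ℓ : E2 | ‖ℓ‖ = 1}, Jfun e f μ te tf (r • ℓ)) := by
  intro x _ y _ a b hab
  have habR : (a : ℝ) + (b : ℝ) = 1 := by
    have := congrArg (fun t : ℝ≥0 => (t : ℝ)) hab
    push_cast at this
    exact this
  by_cases ha0 : a = 0
  · have hb1 : b = 1 := by
      apply NNReal.coe_injective
      rw [ha0] at habR
      simpa using habR
    rw [ha0, hb1]
    simp
  by_cases hb0 : b = 0
  · have ha1 : a = 1 := by
      apply NNReal.coe_injective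
      rw [hb0] at habR
      simpa using habR
    rw [hb0, ha1]
    simp
  by_cases hx0 : x < 0
  · simp only [if_pos hx0]
    rw [ENNReal.mul_top (show (a : ℝ≥0∞) ≠ 0 from by exact_mod_cast ha0), top_add]
    exact le_top
  by_cases hy0 : y < 0
  · simp only [if_pos hy0]
    rw [ENNReal.mul_top (show (b : ℝ≥0∞) ≠ 0 from by exact_mod_cast hb0), add_top]
    exact le_top
  push_neg at hx0 hy0
  have hxy0 : 0 ≤ (a : ℝ) * x + (b : ℝ) * y := by positivity
  simp only [if_neg (not_lt.2 hxy0), if_neg (not_lt.2 hx0), if_neg (not_lt.2 hy0)]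
  have he1 : ‖e‖ = 1 := norm_eq_one_of_inner hee
  have hquasi : ∀ p q : E2, ∀ t : ℝ, 0 ≤ t → t ≤ 1 →
      Jfun e f μ te tf ((1 - t) • p + t • q) ≤ max (Jfun e f μ te tf p) (Jfun e f μ te tf q) :=
    fun p q t h0 h1 => Jfun_quasi p q t h0 h1
  rw [rm_eq he1 _ hquasi hxy0, rm_eq he1 _ hquasi hx0, rm_eq he1 _ hquasi hy0]
  have hg := g_convex (Jfun e f μ te tf)
    (fun p q a' b' hab' => Jfun_convex p q a' b' hab') hx0 hy0 a b habR
  have hh := h_convex (μ := μ) hee hff hef hspan hte0 htf0 hx0 hy0 a b habR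
  calc max (gI (Jfun e f μ te tf) ((a : ℝ) * x + (b : ℝ) * y))
        (hI (Jfun e f μ te tf) ((a : ℝ) * x + (b : ℝ) * y))
      ≤ max ((a : ℝ≥0∞) * gI (Jfun e f μ te tf) x + (b : ℝ≥0∞) * gI (Jfun e f μ te tf) y)
          ((a : ℝ≥0∞) * hI (Jfun e f μ te tf) x + (b : ℝ≥0∞) * hI (Jfun e f μ te tf) y) :=
        max_le_max hg hh
    _ ≤ (a : ℝ≥0∞) * max (gI (Jfun e f μ te tf) x) (hI (Jfun e f μ te tf) x)
          + (b : ℝ≥0∞) * max (gI (Jfun e f μ te tf) y) (hI (Jfun e f μ te tf) y) := by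
        apply max_le
        · exact add_le_add (mul_le_mul_right (le_max_left _ _) _)
            (mul_le_mul_right (le_max_left _ _) _)
        · exact add_le_add (mul_le_mul_right (le_max_right _ _) _)
            (mul_le_mul_right (le_max_right _ _) _)





section GaussAux
open Real

lemma gauss_key (m : ℝ) (v : ℝ≥0) (hv : v ≠ 0) (x : ℝ) :
    (ProbabilityTheory.gaussianPDFReal m v x).toNNReal • Real.exp x
      = Real.exp (m + v / 2) * ProbabilityTheory.gaussianPDFReal (m + v) v x := by
  have hv0 : (0 : ℝ) < v := lt_of_le_of_ne v.coe_nonneg (by exact_mod_cast (Ne.symm hv))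
  rw [NNReal.smul_def, Real.coe_toNNReal _ (ProbabilityTheory.gaussianPDFReal_nonneg m v x)]
  unfold ProbabilityTheory.gaussianPDFReal
  rw [smul_eq_mul, mul_assoc, ← Real.exp_add]
  rw [show Real.exp (m + v / 2) * ((√(2 * π * v))⁻¹ * rexp (- (x - (m + v)) ^ 2 / (2 * v)))
      = (√(2 * π * v))⁻¹ * (Real.exp (m + v / 2) * rexp (- (x - (m + v)) ^ 2 / (2 * v))) by ring]
  rw [← Real.exp_add]
  congr 1
  field_simp
  ring

lemma gauss_exp_integral (m : ℝ) (v : ℝ≥0) :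
    ∫ x, Real.exp x ∂(ProbabilityTheory.gaussianReal m v) = Real.exp (m + v / 2) := by
  rcases eq_or_ne v 0 with rfl | hv
  · rw [ProbabilityTheory.gaussianReal_zero_var, integral_dirac]
    norm_num
  · rw [ProbabilityTheory.gaussianReal_of_var_ne_zero m hv]
    have hmeas : Measurable fun x => (ProbabilityTheory.gaussianPDFReal m v x).toNNReal :=
      (ProbabilityTheory.measurable_gaussianPDFReal m v).real_toNNReal
    have hd : ProbabilityTheory.gaussianPDF m v
        = fun x => ((ProbabilityTheory.gaussianPDFReal m v x).toNNReal : ℝ≥0∞) := rfl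
    rw [hd, integral_withDensity_eq_integral_smul hmeas]
    calc ∫ x, (ProbabilityTheory.gaussianPDFReal m v x).toNNReal • Real.exp x
        = ∫ x, Real.exp (m + v / 2) * ProbabilityTheory.gaussianPDFReal (m + v) v x := by
          simp_rw [gauss_key m v hv]
      _ = Real.exp (m + v / 2) * ∫ x, ProbabilityTheory.gaussianPDFReal (m + v) v x :=
          integral_const_mul _ _
      _ = Real.exp (m + v / 2) := by
          rw [ProbabilityTheory.integral_gaussianPDFReal_eq_one (m + v) hv, mul_one]

end GaussAux


end RadMinAux

/-- If `X₁` has a Gaussian distribution on `ℝ²` with mean `μ` and covariance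
matrix `Σ` (possibly degenerate), then the radial minimum function `ubar I` is convex.
A random vector is Gaussian`(μ, Σ)` iff each linear functional `u·X₁` is a real Gaussian
with mean `u·μ` and variance `uᵀΣu`; this standard characterization is used as hypothesis. -/
theorem radMin_convex_of_gaussian
    {Ω : Type*} [MeasurableSpace Ω] (P : Measure Ω) [IsProbabilityMeasure P]
    (X1 : Ω → E2) (hX : Measurable X1)
    (hLap : ∀ u : E2, Integrable (fun ω => Real.exp ⟪u, X1 ω⟫) P)
    (hGauss : ∀ u : E2,
      P.map (fun ω => ⟪u, X1 ω⟫) =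
        ProbabilityTheory.gaussianReal ⟪u, meanv P X1⟫
          (Real.toNNReal (∑ i, ∑ j, u i * covM P X1 i j * u j))) :
    ENNConvexOn Set.univ (radMin P X1) := by
  classical
  have hXi : ∀ i : Fin 2, Measurable fun ω => X1 ω i := fun i =>
    ((EuclideanSpace.proj i : E2 →L[ℝ] ℝ).continuous.measurable).comp hX
  have hY : ∀ u : E2, Measurable fun ω => ⟪u, X1 ω⟫ := fun u =>
    ((innerSL ℝ u).continuous.measurable).comp hX
  have hexp : ∀ (i : Fin 2) (s : ℝ), Integrable (fun ω => Real.exp (s * X1 ω i)) P := by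
    intro i s
    have h := hLap (EuclideanSpace.single i s)
    have heq : (fun ω => Real.exp (s * X1 ω i))
        = fun ω => Real.exp ⟪EuclideanSpace.single i s, X1 ω⟫ := by
      funext ω; simp [EuclideanSpace.inner_single_left]
    rw [heq]; exact h
  have hinti : ∀ i : Fin 2, Integrable (fun ω => X1 ω i) P := by
    intro i
    have h1 := hexp i 1
    have h2 := hexp i (-1)
    refine Integrable.mono (h1.add h2) (hXi i).aestronglyMeasurable (ae_of_all _ fun ω => ?_)
    have hb := RadMinAux.abs_le_exp_add_exp (X1 ω i)
    have h1e : (1:ℝ) * X1 ω i = X1 ω i := one_mul _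
    have h2e : (-1:ℝ) * X1 ω i = -(X1 ω i) := by ring
    simp only [Pi.add_apply, Real.norm_eq_abs]
    rw [h1e, h2e]
    have hpos : 0 < Real.exp (X1 ω i) + Real.exp (-(X1 ω i)) := by positivity
    rw [abs_of_pos hpos]
    exact hb
  have hsqi : ∀ i : Fin 2, Integrable (fun ω => X1 ω i ^ 2) P := by
    intro i
    have h1 := (hexp i 1).add (hexp i (-1))
    refine Integrable.mono (h1.const_mul 4) ((hXi i).pow_const 2).aestronglyMeasurable
      (ae_of_all _ fun ω => ?_)
    have hb := RadMinAux.sq_le_exp_add_exp (X1 ω i)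
    have h1e : (1:ℝ) * X1 ω i = X1 ω i := one_mul _
    have h2e : (-1:ℝ) * X1 ω i = -(X1 ω i) := by ring
    simp only [Pi.add_apply, Real.norm_eq_abs]
    rw [h1e, h2e, abs_of_nonneg (sq_nonneg (X1 ω i))]
    have hpos : (0:ℝ) < 4 * (Real.exp (X1 ω i) + Real.exp (-(X1 ω i))) := by positivity
    rw [abs_of_pos hpos]
    linarith
  have hintij : ∀ i j : Fin 2, Integrable (fun ω => X1 ω i * X1 ω j) P := by
    intro i j
    refine Integrable.mono ((hsqi i).add (hsqi j)) ((hXi i).mul (hXi j)).aestronglyMeasurable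
      (ae_of_all _ fun ω => ?_)
    simp only [Pi.add_apply, Real.norm_eq_abs]
    have h1 : |X1 ω i * X1 ω j| ≤ X1 ω i ^ 2 + X1 ω j ^ 2 := by
      rw [abs_mul]
      nlinarith [sq_abs (X1 ω i), sq_abs (X1 ω j), sq_nonneg (|X1 ω i| - |X1 ω j|),
        abs_nonneg (X1 ω i), abs_nonneg (X1 ω j)]
    have h2 : |X1 ω i ^ 2 + X1 ω j ^ 2| = X1 ω i ^ 2 + X1 ω j ^ 2 :=
      abs_of_nonneg (by positivity)
    linarith
  have hintX : Integrable X1 P := by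
    refine Integrable.mono' ((hinti 0).abs.add ((hinti 1).abs)) hX.aestronglyMeasurable
      (ae_of_all _ fun ω => ?_)
    rw [EuclideanSpace.norm_eq]
    have h1 : Real.sqrt (∑ i, ‖X1 ω i‖ ^ 2) ≤ Real.sqrt ((|X1 ω 0| + |X1 ω 1|) ^ 2) := by
      apply Real.sqrt_le_sqrt
      rw [Fin.sum_univ_two, Real.norm_eq_abs, Real.norm_eq_abs]
      nlinarith [sq_abs (X1 ω 0), sq_abs (X1 ω 1),
        mul_nonneg (abs_nonneg (X1 ω 0)) (abs_nonneg (X1 ω 1))]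
    rwa [Real.sqrt_sq (by positivity)] at h1
  have hYint : ∀ u : E2, Integrable (fun ω => ⟪u, X1 ω⟫) P := by
    intro u
    have heq : (fun ω => ⟪u, X1 ω⟫) = fun ω => u 0 * X1 ω 0 + u 1 * X1 ω 1 := by
      funext ω; simp [PiLp.inner_apply, Fin.sum_univ_two]; ring
    rw [heq]
    exact ((hinti 0).const_mul _).add ((hinti 1).const_mul _)
  have hY2int : ∀ u : E2, Integrable (fun ω => ⟪u, X1 ω⟫ ^ 2) P := by
    intro u
    have heq : (fun ω => ⟪u, X1 ω⟫ ^ 2)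
        = fun ω => (u 0 * u 0) * (X1 ω 0 * X1 ω 0) + ((u 0 * u 1) * (X1 ω 0 * X1 ω 1)
            + ((u 1 * u 0) * (X1 ω 1 * X1 ω 0) + (u 1 * u 1) * (X1 ω 1 * X1 ω 1))) := by
      funext ω
      simp only [PiLp.inner_apply, RCLike.inner_apply, starRingEnd_apply, star_trivial,
        Fin.sum_univ_two]
      ring
    rw [heq]
    exact ((hintij 0 0).const_mul _).add (((hintij 0 1).const_mul _).add
      (((hintij 1 0).const_mul _).add ((hintij 1 1).const_mul _)))
  have hsecond : ∀ u : E2, ∫ ω, ⟪u, X1 ω⟫ ^ 2 ∂P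
      = ∑ i, ∑ j, u i * (∫ ω, X1 ω i * X1 ω j ∂P) * u j := by
    intro u
    have heq : (fun ω => ⟪u, X1 ω⟫ ^ 2)
        = fun ω => (u 0 * u 0) * (X1 ω 0 * X1 ω 0) + ((u 0 * u 1) * (X1 ω 0 * X1 ω 1)
            + ((u 1 * u 0) * (X1 ω 1 * X1 ω 0) + (u 1 * u 1) * (X1 ω 1 * X1 ω 1))) := by
      funext ω
      simp only [PiLp.inner_apply, RCLike.inner_apply, starRingEnd_apply, star_trivial,
        Fin.sum_univ_two]
      ring
    rw [heq]
    have I00 : Integrable (fun ω => u 0 * u 0 * (X1 ω 0 * X1 ω 0)) P := (hintij 0 0).const_mul _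
    have I01 : Integrable (fun ω => u 0 * u 1 * (X1 ω 0 * X1 ω 1)) P := (hintij 0 1).const_mul _
    have I10 : Integrable (fun ω => u 1 * u 0 * (X1 ω 1 * X1 ω 0)) P := (hintij 1 0).const_mul _
    have I11 : Integrable (fun ω => u 1 * u 1 * (X1 ω 1 * X1 ω 1)) P := (hintij 1 1).const_mul _
    have IB : Integrable (fun ω => u 1 * u 0 * (X1 ω 1 * X1 ω 0)
        + u 1 * u 1 * (X1 ω 1 * X1 ω 1)) P := I10.add I11
    have IA : Integrable (fun ω => u 0 * u 1 * (X1 ω 0 * X1 ω 1)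
        + (u 1 * u 0 * (X1 ω 1 * X1 ω 0) + u 1 * u 1 * (X1 ω 1 * X1 ω 1))) P := I01.add IB
    rw [integral_add I00 IA, integral_add I01 IB, integral_add I10 I11]
    rw [integral_const_mul, integral_const_mul, integral_const_mul, integral_const_mul]
    rw [Fin.sum_univ_two]
    rw [Fin.sum_univ_two, Fin.sum_univ_two]
    ring
  have hmean : ∀ u : E2, ⟪u, meanv P X1⟫ = ∫ ω, ⟪u, X1 ω⟫ ∂P := by
    intro u
    exact (ContinuousLinearMap.integral_comp_comm (innerSL ℝ u) hintX).symm
  have hQnn : ∀ u : E2, 0 ≤ ∑ i, ∑ j, u i * covM P X1 i j * u j := by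
    intro u
    have hcov : ∀ i j, covM P X1 i j
        = (∫ ω, X1 ω i * X1 ω j ∂P) - meanv P X1 i * meanv P X1 j := fun i j => rfl
    have hip : ⟪u, meanv P X1⟫ = u 0 * meanv P X1 0 + u 1 * meanv P X1 1 := by
      simp [PiLp.inner_apply, Fin.sum_univ_two]; ring
    have hsplit : ∑ i, ∑ j, u i * covM P X1 i j * u j
        = (∫ ω, ⟪u, X1 ω⟫ ^ 2 ∂P) - ⟪u, meanv P X1⟫ ^ 2 := by
      rw [hsecond u]
      simp only [Fin.sum_univ_two, hcov, hip]
      ring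
    rw [hsplit]
    set c : ℝ := ∫ ω, ⟪u, X1 ω⟫ ∂P with hcdef
    have hnn : 0 ≤ ∫ ω, (⟪u, X1 ω⟫ - c) ^ 2 ∂P := integral_nonneg fun ω => sq_nonneg _
    have hexpand : ∫ ω, (⟪u, X1 ω⟫ - c) ^ 2 ∂P
        = (∫ ω, ⟪u, X1 ω⟫ ^ 2 ∂P) + ((-2 * c) * (∫ ω, ⟪u, X1 ω⟫ ∂P) + c ^ 2) := by
      have heq : (fun ω => (⟪u, X1 ω⟫ - c) ^ 2)
          = fun ω => ⟪u, X1 ω⟫ ^ 2 + ((-2 * c) * ⟪u, X1 ω⟫ + c ^ 2) := by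
        funext ω; ring
      rw [heq]
      have J0 : Integrable (fun ω => -2 * c * ⟪u, X1 ω⟫) P := (hYint u).const_mul _
      have J1 : Integrable (fun ω => -2 * c * ⟪u, X1 ω⟫ + c ^ 2) P :=
        J0.add (integrable_const _)
      rw [integral_add (hY2int u) J1, integral_add J0 (integrable_const _)]
      rw [integral_const_mul, integral_const]
      simp [measure_univ]
    rw [hmean u, ← hcdef]
    nlinarith [hnn, hexpand]
  have hcgf : ∀ u : E2, cgfT P X1 u
      = ⟪u, meanv P X1⟫ + (∑ i, ∑ j, u i * covM P X1 i j * u j) / 2 := by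
    intro u
    unfold cgfT lapT
    have hmap : ∫ ω, Real.exp ⟪u, X1 ω⟫ ∂P
        = ∫ x, Real.exp x ∂(P.map (fun ω => ⟪u, X1 ω⟫)) :=
      (integral_map (hY u).aemeasurable Real.continuous_exp.aestronglyMeasurable).symm
    rw [hmap, hGauss u, RadMinAux.gauss_exp_integral, Real.log_exp]
    congr 1
    rw [Real.coe_toNNReal _ (hQnn u)]
  have hMherm : (covM P X1).IsHermitian := by
    rw [Matrix.IsHermitian]
    ext i j
    rw [Matrix.conjTranspose_apply]
    rw [star_trivial]
    show covM P X1 j i = covM P X1 i j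
    unfold covM
    simp only [Matrix.of_apply]
    have hc : ∫ ω, X1 ω j * X1 ω i ∂P = ∫ ω, X1 ω i * X1 ω j ∂P := by
      congr 1; funext ω; ring
    rw [hc]; ring
  have horth := hMherm.eigenvectorBasis.orthonormal
  rw [orthonormal_iff_ite] at horth
  have hee : ⟪hMherm.eigenvectorBasis 0, hMherm.eigenvectorBasis 0⟫ = 1 := by
    have := horth 0 0; simpa using this
  have hff : ⟪hMherm.eigenvectorBasis 1, hMherm.eigenvectorBasis 1⟫ = 1 := by
    have := horth 1 1; simpa using this
  have hef : ⟪hMherm.eigenvectorBasis 0, hMherm.eigenvectorBasis 1⟫ = 0 := by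
    have := horth 0 1; simpa using this
  have hspan : ∀ v : E2, ⟪hMherm.eigenvectorBasis 0, v⟫ • hMherm.eigenvectorBasis 0
      + ⟪hMherm.eigenvectorBasis 1, v⟫ • hMherm.eigenvectorBasis 1 = v := fun v => by
    have h := hMherm.eigenvectorBasis.sum_repr' v
    rwa [Fin.sum_univ_two] at h
  have heig : ∀ (k : Fin 2) (i : Fin 2),
      ∑ j, covM P X1 i j * (hMherm.eigenvectorBasis k) j
        = hMherm.eigenvalues k * (hMherm.eigenvectorBasis k) i := by
    intro k i
    have h := hMherm.mulVec_eigenvectorBasis k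
    have h2 := congrFun h i
    simp only [Matrix.mulVec, dotProduct, Pi.smul_apply, smul_eq_mul] at h2
    exact h2
  have hQdiag : ∀ u : E2, ∑ i, ∑ j, u i * covM P X1 i j * u j
      = hMherm.eigenvalues 0 * ⟪hMherm.eigenvectorBasis 0, u⟫ ^ 2
        + hMherm.eigenvalues 1 * ⟪hMherm.eigenvectorBasis 1, u⟫ ^ 2 := by
    intro u
    have happ : ∀ i : Fin 2, u i
        = ⟪hMherm.eigenvectorBasis 0, u⟫ * (hMherm.eigenvectorBasis 0) i
          + ⟪hMherm.eigenvectorBasis 1, u⟫ * (hMherm.eigenvectorBasis 1) i := by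
      intro i
      conv_lhs => rw [← hspan u]
      rfl
    have hinner0 : ⟪hMherm.eigenvectorBasis 0, u⟫
        = (hMherm.eigenvectorBasis 0) 0 * u 0 + (hMherm.eigenvectorBasis 0) 1 * u 1 := by
      simp [PiLp.inner_apply, Fin.sum_univ_two]; ring
    have hinner1 : ⟪hMherm.eigenvectorBasis 1, u⟫
        = (hMherm.eigenvectorBasis 1) 0 * u 0 + (hMherm.eigenvectorBasis 1) 1 * u 1 := by
      simp [PiLp.inner_apply, Fin.sum_univ_two]; ring
    have hcol : ∀ i : Fin 2, covM P X1 i 0 * u 0 + covM P X1 i 1 * u 1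
        = ⟪hMherm.eigenvectorBasis 0, u⟫
            * (hMherm.eigenvalues 0 * (hMherm.eigenvectorBasis 0) i)
          + ⟪hMherm.eigenvectorBasis 1, u⟫
            * (hMherm.eigenvalues 1 * (hMherm.eigenvectorBasis 1) i) := by
      intro i
      have h0 := heig 0 i
      have h1 := heig 1 i
      rw [Fin.sum_univ_two] at h0 h1
      rw [happ 0, happ 1]
      linear_combination ⟪hMherm.eigenvectorBasis 0, u⟫ * h0
        + ⟪hMherm.eigenvectorBasis 1, u⟫ * h1
    have hc0 := hcol 0
    have hc1 := hcol 1
    rw [Fin.sum_univ_two, Fin.sum_univ_two, Fin.sum_univ_two]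
    linear_combination u 0 * hc0 + u 1 * hc1
      - hMherm.eigenvalues 0 * ⟪hMherm.eigenvectorBasis 0, u⟫ * hinner0
      - hMherm.eigenvalues 1 * ⟪hMherm.eigenvectorBasis 1, u⟫ * hinner1
  have hfe : ⟪hMherm.eigenvectorBasis 1, hMherm.eigenvectorBasis 0⟫ = 0 := by
    rw [real_inner_comm]; exact hef
  have hτe : 0 ≤ hMherm.eigenvalues 0 := by
    have h := hQnn (hMherm.eigenvectorBasis 0)
    rw [hQdiag, hee, hfe] at h
    nlinarith [h]
  have hτf : 0 ≤ hMherm.eigenvalues 1 := by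
    have h := hQnn (hMherm.eigenvectorBasis 1)
    rw [hQdiag, hff, hef] at h
    nlinarith [h]
  have hrate : rateI P X1 = RadMinAux.Jfun (hMherm.eigenvectorBasis 0)
      (hMherm.eigenvectorBasis 1) (meanv P X1) (hMherm.eigenvalues 0) (hMherm.eigenvalues 1) := by
    funext v
    unfold rateI RadMinAux.Jfun
    apply iSup_congr
    intro u
    rw [hcgf u, hQdiag u]
    rfl
  have hfinal : radMin P X1 = fun r => if r < 0 then (⊤ : ℝ≥0∞) else
      ⨅ ℓ ∈ {ℓ : E2 | ‖ℓ‖ = 1}, RadMinAux.Jfun (hMherm.eigenvectorBasis 0)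
        (hMherm.eigenvectorBasis 1) (meanv P X1) (hMherm.eigenvalues 0)
        (hMherm.eigenvalues 1) (r • ℓ) := by
    funext r
    unfold radMin
    rw [hrate]
  rw [hfinal]
  exact RadMinAux.core_main _ _ _ _ _ hτe hτf hee hff hef hspan

end
end

section
/- For every r ≥ |μ|, (conv ubar I)(r) = (bar K)*(r), i.e. the largest convex minorant of the radial minimum of the rate function equals, on [|μ|, ∞), the Legendre–Fenchel conjugate of the radial maximum of the cumulant generating function. -/
open MeasureTheory Set Filter
open scoped ENNReal NNReal RealInnerProductSpace Topology

noncomputable section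

/-- The radial maximum `bar K(p) = max_{|ℓ|=1} K(pℓ)` of the cumulant generating function. -/
def barK {Ω : Type*} [MeasurableSpace Ω] (P : Measure Ω) (X1 : Ω → E2) (p : ℝ) : ℝ :=
  sSup ((fun ℓ : E2 => cgfT P X1 (p • ℓ)) '' {ℓ : E2 | ‖ℓ‖ = 1})

/-- The radial maximum `bar 𝓛(p) = max_{|ℓ|=1} 𝓛(pℓ)` of the Laplace transform. -/
def barL {Ω : Type*} [MeasurableSpace Ω] (P : Measure Ω) (X1 : Ω → E2) (p : ℝ) : ℝ :=
  sSup ((fun ℓ : E2 => lapT P X1 (p • ℓ)) '' {ℓ : E2 | ‖ℓ‖ = 1})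

/-- The set of maximal directions `bar Λ_p = argmax_{|ℓ|=1} K(pℓ)`. -/
def maxDirs {Ω : Type*} [MeasurableSpace Ω] (P : Measure Ω) (X1 : Ω → E2) (p : ℝ) :
    Set E2 :=
  {ℓ : E2 | ‖ℓ‖ = 1 ∧ ∀ ℓ' : E2, ‖ℓ'‖ = 1 → cgfT P X1 (p • ℓ') ≤ cgfT P X1 (p • ℓ)}

/-- The Legendre–Fenchel conjugate `(bar K)*(r) = sup_{p}(pr − bar K(p))` of `bar K`,
where `bar K(p) = +∞` for `p < 0` (so the supremum runs over `p ≥ 0`).  Since the value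
`0·r − bar K(0) = −K̄(0) = 0` is attained, the `ℝ≥0∞`-valued clamped supremum agrees with
the usual one. -/
def barKconj {Ω : Type*} [MeasurableSpace Ω] (P : Measure Ω) (X1 : Ω → E2) (r : ℝ) :
    ℝ≥0∞ :=
  ⨆ p ∈ Set.Ici (0 : ℝ), ENNReal.ofReal (p * r - barK P X1 p)

lemma norm_le_coords (x : E2) : ‖x‖ ≤ |x 0| + |x 1| := by
  rw [EuclideanSpace.norm_eq]
  have h0 : ∑ i, ‖x i‖ ^ 2 = ‖x 0‖ ^ 2 + ‖x 1‖ ^ 2 := Fin.sum_univ_two _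
  rw [h0]
  have h1 : Real.sqrt (‖x 0‖ ^ 2 + ‖x 1‖ ^ 2) ≤ Real.sqrt ((|x 0| + |x 1|) ^ 2) := by
    apply Real.sqrt_le_sqrt
    simp only [Real.norm_eq_abs]
    nlinarith [abs_nonneg (x 0), abs_nonneg (x 1)]
  calc Real.sqrt (‖x 0‖ ^ 2 + ‖x 1‖ ^ 2) ≤ Real.sqrt ((|x 0| + |x 1|) ^ 2) := h1
    _ = |x 0| + |x 1| := Real.sqrt_sq (by positivity)

lemma exp_abs_le (t : ℝ) : Real.exp |t| ≤ Real.exp t + Real.exp (-t) := by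
  rcases abs_cases t with ⟨h, _⟩ | ⟨h, _⟩ <;> rw [h] <;>
    [linarith [Real.exp_pos (-t)]; linarith [Real.exp_pos t]]

lemma norm_le_D (x : E2) :
    ‖x‖ ≤ (Real.exp (x 0) + Real.exp (-(x 0))) * (Real.exp (x 1) + Real.exp (-(x 1))) := by
  have h1 : ‖x‖ ≤ |x 0| + |x 1| := norm_le_coords x
  have h2 : |x 0| + |x 1| + 1 ≤ Real.exp (|x 0| + |x 1|) := Real.add_one_le_exp _
  have h3 : Real.exp (|x 0| + |x 1|) = Real.exp |x 0| * Real.exp |x 1| := Real.exp_add _ _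
  have h4 := exp_abs_le (x 0)
  have h5 := exp_abs_le (x 1)
  have h6 : Real.exp |x 0| * Real.exp |x 1| ≤
      (Real.exp (x 0) + Real.exp (-(x 0))) * (Real.exp (x 1) + Real.exp (-(x 1))) := by
    apply mul_le_mul h4 h5 (Real.exp_pos _).le
    positivity
  nlinarith [abs_nonneg (x 0), abs_nonneg (x 1)]

section Aux
variable {Ω : Type*} [MeasurableSpace Ω] (P : Measure Ω) [IsProbabilityMeasure P]
  (X1 : Ω → E2) (hX : Measurable X1)
  (hLap : ∀ u : E2, Integrable (fun ω => Real.exp ⟪u, X1 ω⟫) P)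

set_option linter.unusedSectionVars false

include hX hLap

lemma meas_exp (u : E2) : Measurable (fun ω => Real.exp ⟪u, X1 ω⟫) :=
  (Real.continuous_exp.comp (continuous_const.inner continuous_id)).measurable.comp hX

lemma integrable_exp_coords (c d : ℝ) :
    Integrable (fun ω => Real.exp (c * X1 ω 0 + d * X1 ω 1)) P := by
  have h := hLap (c • EuclideanSpace.single 0 (1:ℝ) + d • EuclideanSpace.single 1 (1:ℝ))
  simpa [inner_add_left, real_inner_smul_left, EuclideanSpace.inner_single_left] using h

lemma integrable_D (c : ℝ) :
    Integrable (fun ω => (Real.exp (c * X1 ω 0) + Real.exp (-(c * X1 ω 0))) *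
      (Real.exp (c * X1 ω 1) + Real.exp (-(c * X1 ω 1)))) P := by
  have e : (fun ω => (Real.exp (c * X1 ω 0) + Real.exp (-(c * X1 ω 0))) *
      (Real.exp (c * X1 ω 1) + Real.exp (-(c * X1 ω 1))))
      = fun ω => Real.exp (c * X1 ω 0 + c * X1 ω 1) + Real.exp (c * X1 ω 0 + (-c) * X1 ω 1)
        + (Real.exp ((-c) * X1 ω 0 + c * X1 ω 1) + Real.exp ((-c) * X1 ω 0 + (-c) * X1 ω 1)) := by
    funext ω
    simp only [Real.exp_add, neg_mul]
    ring
  rw [e]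
  exact (((integrable_exp_coords P X1 hX hLap c c).add
    (integrable_exp_coords P X1 hX hLap c (-c))).add
    ((integrable_exp_coords P X1 hX hLap (-c) c).add
    (integrable_exp_coords P X1 hX hLap (-c) (-c))))

lemma integrable_X1 : Integrable X1 P := by
  apply Integrable.mono' (g := fun ω => (Real.exp (1 * X1 ω 0) + Real.exp (-(1 * X1 ω 0))) *
      (Real.exp (1 * X1 ω 1) + Real.exp (-(1 * X1 ω 1)))) (integrable_D P X1 hX hLap 1)
    hX.aestronglyMeasurable
  filter_upwards with ω
  simpa using norm_le_D (X1 ω)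

lemma integrable_inner (u : E2) : Integrable (fun ω => ⟪u, X1 ω⟫) P := by
  apply Integrable.mono' ((integrable_X1 P X1 hX hLap).norm.const_mul ‖u‖)
    ((continuous_const.inner continuous_id).measurable.comp hX).aestronglyMeasurable
  filter_upwards with ω
  simpa [Real.norm_eq_abs] using abs_real_inner_le_norm u (X1 ω)

lemma jensen_exp (u : E2) : Real.exp ⟪u, meanv P X1⟫ ≤ lapT P X1 u := by
  set m := ⟪u, meanv P X1⟫ with hm
  have hmi : m = ∫ ω, ⟪u, X1 ω⟫ ∂P := (integral_inner (integrable_X1 P X1 hX hLap) u).symm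
  have hpt : ∀ ω, Real.exp m * (⟪u, X1 ω⟫ - m + 1) ≤ Real.exp ⟪u, X1 ω⟫ := by
    intro ω
    have h := Real.add_one_le_exp (⟪u, X1 ω⟫ - m)
    have h2 := mul_le_mul_of_nonneg_left h (Real.exp_pos m).le
    rwa [← Real.exp_add, add_sub_cancel] at h2
  have hint : Integrable (fun ω => Real.exp m * (⟪u, X1 ω⟫ - m + 1)) P :=
    (((integrable_inner P X1 hX hLap u).sub (integrable_const m)).add
      (integrable_const 1)).const_mul _
  have hmono := integral_mono hint (hLap u) hpt
  have hval : ∫ ω, (⟪u, X1 ω⟫ - m + 1) ∂P = 1 := by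
    have h1 : Integrable (fun ω => ⟪u, X1 ω⟫ - m) P := by
      exact (integrable_inner P X1 hX hLap u).sub (integrable_const m)
    rw [integral_add h1 (integrable_const 1),
      integral_sub (integrable_inner P X1 hX hLap u) (integrable_const m), ← hmi]
    simp
  calc Real.exp m = ∫ ω, Real.exp m * (⟪u, X1 ω⟫ - m + 1) ∂P := by
        rw [integral_const_mul, hval, mul_one]
    _ ≤ lapT P X1 u := hmono

lemma lapT_pos (u : E2) : 0 < lapT P X1 u :=
  lt_of_lt_of_le (Real.exp_pos _) (jensen_exp P X1 hX hLap u)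

lemma inner_mean_le_cgfT (u : E2) : ⟪u, meanv P X1⟫ ≤ cgfT P X1 u :=
  (Real.le_log_iff_exp_le (lapT_pos P X1 hX hLap u)).mpr (jensen_exp P X1 hX hLap u)

lemma rateI_mean : rateI P X1 (meanv P X1) = 0 := by
  refine le_antisymm (iSup_le fun u => ?_) zero_le
  rw [ENNReal.ofReal_eq_zero.mpr (by linarith [inner_mean_le_cgfT P X1 hX hLap u])]

end Aux

section Aux2
set_option linter.unusedSectionVars false
variable {Ω : Type*} [MeasurableSpace Ω] (P : Measure Ω) [IsProbabilityMeasure P]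
  (X1 : Ω → E2) (hX : Measurable X1)
  (hLap : ∀ u : E2, Integrable (fun ω => Real.exp ⟪u, X1 ω⟫) P)

lemma unit_norm : ‖(EuclideanSpace.single 0 (1:ℝ) : E2)‖ = 1 := by
  simp [EuclideanSpace.norm_single]

include hX hLap

lemma radMin_le (r : ℝ) (hr : 0 ≤ r) {ℓ : E2} (hℓ : ‖ℓ‖ = 1) :
    radMin P X1 r ≤ rateI P X1 (r • ℓ) := by
  rw [radMin, if_neg (not_lt.mpr hr)]
  exact iInf₂_le ℓ hℓ

lemma radMin_mean : radMin P X1 ‖meanv P X1‖ = 0 := by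
  refine le_antisymm ?_ zero_le
  have hm := rateI_mean P X1 hX hLap
  rcases eq_or_ne (meanv P X1) 0 with h0 | h0
  · rw [h0, norm_zero]
    have h := radMin_le P X1 hX hLap 0 le_rfl unit_norm
    rw [zero_smul] at h
    rw [h0] at hm
    exact le_trans h (le_of_eq hm)
  · set ℓ : E2 := ‖meanv P X1‖⁻¹ • meanv P X1 with hℓdef
    have hn : ‖meanv P X1‖ ≠ 0 := norm_ne_zero_iff.mpr h0
    have hℓ : ‖ℓ‖ = 1 := by
      rw [hℓdef, norm_smul, norm_inv, norm_norm, inv_mul_cancel₀ hn]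
    have h := radMin_le P X1 hX hLap ‖meanv P X1‖ (norm_nonneg _) hℓ
    rw [hℓdef, smul_smul, mul_inv_cancel₀ hn, one_smul, hm] at h
    exact h

lemma exp_inner_smul_le (p : ℝ) {ℓ : E2} (hℓ : ‖ℓ‖ = 1) (x : E2) :
    Real.exp ⟪p • ℓ, x⟫ ≤ (Real.exp (|p| * x 0) + Real.exp (-(|p| * x 0))) *
      (Real.exp (|p| * x 1) + Real.exp (-(|p| * x 1))) := by
  have h1 : ⟪p • ℓ, x⟫ ≤ |p| * |x 0| + |p| * |x 1| := by
    rw [real_inner_smul_left]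
    have ha : p * ⟪ℓ, x⟫ ≤ |p| * |⟪ℓ, x⟫| := by
      rw [← abs_mul]; exact le_abs_self _
    have hb : |⟪ℓ, x⟫| ≤ ‖x‖ := by
      have := abs_real_inner_le_norm ℓ x
      rwa [hℓ, one_mul] at this
    have hc := norm_le_coords x
    nlinarith [abs_nonneg p]
  have h2 : Real.exp ⟪p • ℓ, x⟫ ≤ Real.exp (|p| * |x 0|) * Real.exp (|p| * |x 1|) := by
    rw [← Real.exp_add]; exact Real.exp_le_exp.mpr h1
  have e0 : |p| * |x 0| = |(|p| * x 0)| := by rw [abs_mul, abs_abs]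
  have e1 : |p| * |x 1| = |(|p| * x 1)| := by rw [abs_mul, abs_abs]
  have h4 := exp_abs_le (|p| * x 0)
  have h5 := exp_abs_le (|p| * x 1)
  calc Real.exp ⟪p • ℓ, x⟫ ≤ Real.exp (|p| * |x 0|) * Real.exp (|p| * |x 1|) := h2
    _ ≤ _ := by
        rw [e0, e1]
        exact mul_le_mul h4 h5 (Real.exp_pos _).le (by positivity)

lemma bddAbove_K_sphere (p : ℝ) :
    BddAbove ((fun ℓ : E2 => cgfT P X1 (p • ℓ)) '' {ℓ : E2 | ‖ℓ‖ = 1}) := by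
  refine ⟨Real.log (∫ ω, (Real.exp (|p| * X1 ω 0) + Real.exp (-(|p| * X1 ω 0))) *
      (Real.exp (|p| * X1 ω 1) + Real.exp (-(|p| * X1 ω 1))) ∂P), ?_⟩
  rintro y ⟨ℓ, hℓ, rfl⟩
  refine Real.log_le_log (lapT_pos P X1 hX hLap _) ?_
  exact integral_mono (hLap _) (integrable_D P X1 hX hLap |p|)
    (fun ω => exp_inner_smul_le P X1 hX hLap p hℓ (X1 ω))

lemma K_le_barK (p : ℝ) {ℓ : E2} (hℓ : ‖ℓ‖ = 1) : cgfT P X1 (p • ℓ) ≤ barK P X1 p :=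
  le_csSup (bddAbove_K_sphere P X1 hX hLap p) ⟨ℓ, hℓ, rfl⟩

lemma barK_le {p b : ℝ} (hb : ∀ ℓ : E2, ‖ℓ‖ = 1 → cgfT P X1 (p • ℓ) ≤ b) :
    barK P X1 p ≤ b := by
  refine csSup_le ⟨_, ⟨_, unit_norm, rfl⟩⟩ ?_
  rintro y ⟨ℓ, hℓ, rfl⟩
  exact hb ℓ hℓ

end Aux2

lemma ofReal_max_zero (A : ℝ) : ENNReal.ofReal (max A 0) = ENNReal.ofReal A := by
  rcases le_total A 0 with h | h
  · rw [max_eq_right h, ENNReal.ofReal_zero, eq_comm, ENNReal.ofReal_eq_zero]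
    exact h
  · rw [max_eq_left h]

lemma affine_convex (p c : ℝ) :
    ENNConvexOn Set.univ (fun x => ENNReal.ofReal (p * x - c)) := by
  intro x _ y _ a b hab
  have hab' : (a : ℝ) + b = 1 := by exact_mod_cast congrArg NNReal.toReal hab
  have key : p * ((a : ℝ) * x + (b : ℝ) * y) - c
      = (a : ℝ) * (p * x - c) + (b : ℝ) * (p * y - c) := by linear_combination c * hab'
  show ENNReal.ofReal (p * ((a : ℝ) * x + (b : ℝ) * y) - c) ≤
    (a : ℝ≥0∞) * ENNReal.ofReal (p * x - c) + (b : ℝ≥0∞) * ENNReal.ofReal (p * y - c)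
  rw [key]
  calc ENNReal.ofReal ((a : ℝ) * (p * x - c) + (b : ℝ) * (p * y - c))
      ≤ ENNReal.ofReal ((a : ℝ) * max (p * x - c) 0 + (b : ℝ) * max (p * y - c) 0) := by
        refine ENNReal.ofReal_le_ofReal (add_le_add ?_ ?_) <;>
          exact mul_le_mul_of_nonneg_left (le_max_left _ _) (NNReal.coe_nonneg _)
    _ = ENNReal.ofReal ((a : ℝ) * max (p * x - c) 0) +
        ENNReal.ofReal ((b : ℝ) * max (p * y - c) 0) :=
        ENNReal.ofReal_add (by positivity) (by positivity)
    _ = (a : ℝ≥0∞) * ENNReal.ofReal (p * x - c) + (b : ℝ≥0∞) * ENNReal.ofReal (p * y - c) := by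
        rw [ENNReal.ofReal_mul (NNReal.coe_nonneg a), ENNReal.ofReal_mul (NNReal.coe_nonneg b),
          ofReal_max_zero, ofReal_max_zero, ENNReal.ofReal_coe_nnreal,
          ENNReal.ofReal_coe_nnreal]

section Aux3
set_option linter.unusedSectionVars false
variable {Ω : Type*} [MeasurableSpace Ω] (P : Measure Ω) [IsProbabilityMeasure P]
  (X1 : Ω → E2) (hX : Measurable X1)
  (hLap : ∀ u : E2, Integrable (fun ω => Real.exp ⟪u, X1 ω⟫) P)

include hX hLap

lemma minorant_affine (p : ℝ) (y : ℝ) :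
    ENNReal.ofReal (p * y - barK P X1 p) ≤ radMin P X1 y := by
  rcases lt_or_ge y 0 with hy | hy
  · rw [radMin, if_pos hy]; exact le_top
  · rw [radMin, if_neg (not_lt.mpr hy)]
    refine le_iInf₂ fun ℓ hℓ => ?_
    calc ENNReal.ofReal (p * y - barK P X1 p)
        ≤ ENNReal.ofReal (p * y - cgfT P X1 (p • ℓ)) :=
          ENNReal.ofReal_le_ofReal (by linarith [K_le_barK P X1 hX hLap p hℓ])
      _ = ENNReal.ofReal (⟪p • ℓ, y • ℓ⟫ - cgfT P X1 (p • ℓ)) := by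
          rw [real_inner_smul_left, real_inner_smul_right, real_inner_self_eq_norm_sq, hℓ]
          ring_nf
      _ ≤ rateI P X1 (y • ℓ) := le_iSup
          (fun u => ENNReal.ofReal (⟪u, y • ℓ⟫ - cgfT P X1 u)) (p • ℓ)

lemma barKconj_le_convMin (r : ℝ) : barKconj P X1 r ≤ convMin (radMin P X1) r := by
  refine iSup₂_le fun p hp => ?_
  have hmem : (fun x => ENNReal.ofReal (p * x - barK P X1 p)) ∈
      {h : ℝ → ℝ≥0∞ | ENNConvexOn Set.univ h ∧ ∀ y, h y ≤ radMin P X1 y} :=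
    ⟨affine_convex _ _, fun y => minorant_affine P X1 hX hLap p y⟩
  exact le_iSup₂ (f := fun (h : ℝ → ℝ≥0∞) (_ : h ∈ _) => h r) _ hmem

end Aux3

section Aux4
set_option linter.unusedSectionVars false
variable {Ω : Type*} [MeasurableSpace Ω] (P : Measure Ω) [IsProbabilityMeasure P]
  (X1 : Ω → E2) (hX : Measurable X1)
  (hLap : ∀ u : E2, Integrable (fun ω => Real.exp ⟪u, X1 ω⟫) P)

include hX hLap

lemma lapT_holder (u w : E2) {a b : ℝ} (ha : 0 < a) (hb : 0 < b) (hab : a + b = 1) :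
    lapT P X1 (a • u + b • w) ≤ lapT P X1 u ^ a * lapT P X1 w ^ b := by
  have ha1 : a < 1 := by linarith
  set F : Ω → ℝ := fun ω => Real.exp ⟪u, X1 ω⟫ with hF
  set G : Ω → ℝ := fun ω => Real.exp ⟪w, X1 ω⟫ with hG
  have hFG : ∀ ω, Real.exp ⟪a • u + b • w, X1 ω⟫ = F ω ^ a * G ω ^ b := by
    intro ω
    rw [inner_add_left, real_inner_smul_left, real_inner_smul_left, Real.exp_add,
      mul_comm a _, mul_comm b _, Real.exp_mul, Real.exp_mul]
  set φ : Ω → ℝ≥0∞ := fun ω => ENNReal.ofReal (F ω) with hφ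
  set γ : Ω → ℝ≥0∞ := fun ω => ENNReal.ofReal (G ω) with hγ
  have hφm : AEMeasurable (fun ω => φ ω ^ a) P :=
    ((meas_exp P X1 hX hLap u).ennreal_ofReal.pow_const a).aemeasurable
  have hγm : AEMeasurable (fun ω => γ ω ^ b) P :=
    ((meas_exp P X1 hX hLap w).ennreal_ofReal.pow_const b).aemeasurable
  have hconj : (1/a).HolderConjugate (1/b) := by
    rw [Real.holderConjugate_iff]
    constructor
    · rw [lt_div_iff₀ ha, one_mul]; exact ha1
    · rw [one_div, one_div, inv_inv, inv_inv]; exact hab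
  have hold := ENNReal.lintegral_mul_le_Lp_mul_Lq P hconj hφm hγm
  have e1 : ∀ ω, (fun ω => φ ω ^ a) ω ^ (1/a) = φ ω := by
    intro ω
    rw [← ENNReal.rpow_mul, mul_one_div_cancel (ne_of_gt ha), ENNReal.rpow_one]
  have e2 : ∀ ω, (fun ω => γ ω ^ b) ω ^ (1/b) = γ ω := by
    intro ω
    rw [← ENNReal.rpow_mul, mul_one_div_cancel (ne_of_gt hb), ENNReal.rpow_one]
  simp only [e1, e2, one_div_one_div] at hold
  -- hold : ∫⁻ (φ^a * γ^b) ≤ (∫⁻ φ) ^ a * (∫⁻ γ) ^ b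
  have hL1 : ∫⁻ ω, φ ω ∂P = ENNReal.ofReal (lapT P X1 u) :=
    (MeasureTheory.ofReal_integral_eq_lintegral_ofReal (hLap u)
      (Eventually.of_forall fun ω => (Real.exp_pos _).le)).symm
  have hL2 : ∫⁻ ω, γ ω ∂P = ENNReal.ofReal (lapT P X1 w) :=
    (MeasureTheory.ofReal_integral_eq_lintegral_ofReal (hLap w)
      (Eventually.of_forall fun ω => (Real.exp_pos _).le)).symm
  have hlhs : lapT P X1 (a • u + b • w)
      = (∫⁻ ω, ((fun ω => φ ω ^ a) * fun ω => γ ω ^ b) ω ∂P).toReal := by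
    rw [lapT, MeasureTheory.integral_eq_lintegral_of_nonneg_ae
      (Eventually.of_forall fun ω => (Real.exp_pos _).le)
      (meas_exp P X1 hX hLap _).aestronglyMeasurable]
    congr 1
    apply lintegral_congr
    intro ω
    rw [hFG ω]
    simp only [Pi.mul_apply]
    rw [ENNReal.ofReal_mul (by positivity), ← ENNReal.ofReal_rpow_of_pos (Real.exp_pos _),
      ← ENNReal.ofReal_rpow_of_pos (Real.exp_pos _)]
  rw [hlhs]
  have hfin : (∫⁻ ω, φ ω ∂P) ^ a * (∫⁻ ω, γ ω ∂P) ^ b ≠ ⊤ := by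
    rw [hL1, hL2]
    exact ENNReal.mul_ne_top (ENNReal.rpow_ne_top_of_nonneg ha.le ENNReal.ofReal_ne_top)
      (ENNReal.rpow_ne_top_of_nonneg hb.le ENNReal.ofReal_ne_top)
  calc (∫⁻ ω, ((fun ω => φ ω ^ a) * fun ω => γ ω ^ b) ω ∂P).toReal
      ≤ ((∫⁻ ω, φ ω ∂P) ^ a * (∫⁻ ω, γ ω ∂P) ^ b).toReal := ENNReal.toReal_mono hfin hold
    _ = lapT P X1 u ^ a * lapT P X1 w ^ b := by
        rw [hL1, hL2, ENNReal.toReal_mul, ← ENNReal.toReal_rpow, ← ENNReal.toReal_rpow,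
          ENNReal.toReal_ofReal (lapT_pos P X1 hX hLap u).le,
          ENNReal.toReal_ofReal (lapT_pos P X1 hX hLap w).le]

lemma cgfT_convex (u w : E2) {a b : ℝ} (ha : 0 ≤ a) (hb : 0 ≤ b) (hab : a + b = 1) :
    cgfT P X1 (a • u + b • w) ≤ a * cgfT P X1 u + b * cgfT P X1 w := by
  rcases eq_or_lt_of_le ha with ha0 | ha'
  · obtain rfl : a = 0 := ha0.symm
    obtain rfl : b = 1 := by linarith
    simp
  rcases eq_or_lt_of_le hb with hb0 | hb'
  · obtain rfl : b = 0 := hb0.symm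
    obtain rfl : a = 1 := by linarith
    simp
  have h := lapT_holder P X1 hX hLap u w ha' hb' hab
  have hlog := Real.log_le_log (lapT_pos P X1 hX hLap _) h
  rw [Real.log_mul (ne_of_gt (Real.rpow_pos_of_pos (lapT_pos P X1 hX hLap u) a))
    (ne_of_gt (Real.rpow_pos_of_pos (lapT_pos P X1 hX hLap w) b)),
    Real.log_rpow (lapT_pos P X1 hX hLap u),
    Real.log_rpow (lapT_pos P X1 hX hLap w)] at hlog
  exact hlog

lemma integrable_exp_mix (u₀ : E2) (c d : ℝ) :
    Integrable (fun ω => Real.exp (⟪u₀, X1 ω⟫ + (c * X1 ω 0 + d * X1 ω 1))) P := by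
  have h := hLap (u₀ + (c • EuclideanSpace.single 0 (1:ℝ) + d • EuclideanSpace.single 1 (1:ℝ)))
  simpa [inner_add_left, real_inner_smul_left, EuclideanSpace.inner_single_left] using h

lemma continuous_lapT : Continuous (lapT P X1) := by
  rw [continuous_iff_continuousAt]
  intro u₀
  apply MeasureTheory.continuousAt_of_dominated
    (bound := fun ω => Real.exp ⟪u₀, X1 ω⟫ * ((Real.exp (X1 ω 0) + Real.exp (-(X1 ω 0))) *
      (Real.exp (X1 ω 1) + Real.exp (-(X1 ω 1)))))
  · exact Eventually.of_forall fun u => (meas_exp P X1 hX hLap u).aestronglyMeasurable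
  · filter_upwards [Metric.ball_mem_nhds u₀ one_pos] with u hu
    refine Eventually.of_forall fun ω => ?_
    set x := X1 ω
    rw [Real.norm_eq_abs, Real.abs_exp]
    have hsplit : ⟪u, x⟫ = ⟪u₀, x⟫ + ⟪u - u₀, x⟫ := by
      rw [inner_sub_left]; ring
    have h1 : ⟪u - u₀, x⟫ ≤ ‖x‖ := by
      have h2 := real_inner_le_norm (u - u₀) x
      have h3 : ‖u - u₀‖ < 1 := by rwa [← dist_eq_norm, ← Metric.mem_ball]
      nlinarith [norm_nonneg x, norm_nonneg (u - u₀)]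
    have h4 : Real.exp ⟪u - u₀, x⟫ ≤ (Real.exp (x 0) + Real.exp (-(x 0))) *
        (Real.exp (x 1) + Real.exp (-(x 1))) := by
      have h5 : Real.exp ⟪u - u₀, x⟫ ≤ Real.exp |x 0| * Real.exp |x 1| := by
        rw [← Real.exp_add]
        exact Real.exp_le_exp.mpr (le_trans h1 (le_trans (norm_le_coords x)
          (le_trans (by linarith [Real.add_one_le_exp (|x 0| + |x 1|)]) (le_of_eq rfl))))
      calc Real.exp ⟪u - u₀, x⟫ ≤ Real.exp |x 0| * Real.exp |x 1| := h5
        _ ≤ _ := mul_le_mul (exp_abs_le _) (exp_abs_le _) (Real.exp_pos _).le (by positivity)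
    rw [hsplit, Real.exp_add]
    exact mul_le_mul_of_nonneg_left h4 (Real.exp_pos _).le
  · have e : (fun ω => Real.exp ⟪u₀, X1 ω⟫ * ((Real.exp (X1 ω 0) + Real.exp (-(X1 ω 0))) *
        (Real.exp (X1 ω 1) + Real.exp (-(X1 ω 1)))))
        = fun ω => Real.exp (⟪u₀, X1 ω⟫ + (1 * X1 ω 0 + 1 * X1 ω 1))
          + Real.exp (⟪u₀, X1 ω⟫ + (1 * X1 ω 0 + (-1) * X1 ω 1))
          + (Real.exp (⟪u₀, X1 ω⟫ + ((-1) * X1 ω 0 + 1 * X1 ω 1))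
          + Real.exp (⟪u₀, X1 ω⟫ + ((-1) * X1 ω 0 + (-1) * X1 ω 1))) := by
      funext ω
      simp only [Real.exp_add, neg_mul, one_mul]
      ring
    rw [e]
    exact (((integrable_exp_mix P X1 hX hLap u₀ 1 1).add
      (integrable_exp_mix P X1 hX hLap u₀ 1 (-1))).add
      ((integrable_exp_mix P X1 hX hLap u₀ (-1) 1).add
      (integrable_exp_mix P X1 hX hLap u₀ (-1) (-1))))
  · refine Eventually.of_forall fun ω => ?_
    exact (Real.continuous_exp.comp (continuous_id.inner continuous_const)).continuousAt

lemma continuous_cgfT : Continuous (cgfT P X1) := by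
  rw [continuous_iff_continuousAt]
  intro u₀
  exact (Real.continuousAt_log (ne_of_gt (lapT_pos P X1 hX hLap u₀))).comp
    (continuous_lapT P X1 hX hLap).continuousAt

end Aux4

section Aux5
set_option linter.unusedSectionVars false
variable {Ω : Type*} [MeasurableSpace Ω] (P : Measure Ω) [IsProbabilityMeasure P]
  (X1 : Ω → E2) (hX : Measurable X1)
  (hLap : ∀ u : E2, Integrable (fun ω => Real.exp ⟪u, X1 ω⟫) P)

include hX hLap

lemma exists_subgrad (u₀ : E2) :
    ∃ v : E2, ∀ u : E2, cgfT P X1 u₀ + ⟪u - u₀, v⟫ ≤ cgfT P X1 u := by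
  classical
  have hKc : Continuous (cgfT P X1) := continuous_cgfT P X1 hX hLap
  set s : Set (E2 × ℝ) := {q | cgfT P X1 q.1 < q.2} with hs
  have hsopen : IsOpen s := isOpen_lt (hKc.comp continuous_fst) continuous_snd
  have hsconv : Convex ℝ s := by
    rintro ⟨x, y⟩ hx ⟨x', y'⟩ hx' a b ha hb hab
    simp only [hs, mem_setOf_eq] at hx hx' ⊢
    have h := cgfT_convex P X1 hX hLap x x' ha hb hab
    have h2 : a * cgfT P X1 x + b * cgfT P X1 x' < a * y + b * y' := by
      rcases lt_or_eq_of_le ha with ha' | ha0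
      · exact add_lt_add_of_lt_of_le (mul_lt_mul_of_pos_left hx ha')
          (mul_le_mul_of_nonneg_left hx'.le hb)
      · obtain rfl : a = 0 := ha0.symm
        obtain rfl : b = 1 := by linarith
        simpa using hx'
    exact lt_of_le_of_lt h h2
  have hpt : ((u₀, cgfT P X1 u₀) : E2 × ℝ) ∉ s := by
    simp [hs]
  obtain ⟨f, hf⟩ := geometric_hahn_banach_open_point hsconv hsopen hpt
  set c : ℝ := f (0, 1) with hc
  have hfsplit : ∀ (u : E2) (y : ℝ), f (u, y) = f (u, 0) + y * c := by
    intro u y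
    have e : ((u, y) : E2 × ℝ) = (u, (0:ℝ)) + y • ((0:E2), (1:ℝ)) := by
      simp [Prod.ext_iff]
    rw [e, map_add, _root_.map_smul, smul_eq_mul]
  have hclt : c < 0 := by
    have h := hf (u₀, cgfT P X1 u₀ + 1) (by simp [hs])
    rw [hfsplit u₀ (cgfT P X1 u₀ + 1), hfsplit u₀ (cgfT P X1 u₀)] at h
    linarith
  have hineq : ∀ u, f (u, 0) + cgfT P X1 u * c ≤ f (u₀, 0) + cgfT P X1 u₀ * c := by
    intro u
    by_contra hcon
    push_neg at hcon
    set ε := (f (u, 0) + cgfT P X1 u * c - (f (u₀, 0) + cgfT P X1 u₀ * c)) / (-c) with hε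
    have hεpos : 0 < ε := div_pos (by linarith) (by linarith)
    have h := hf (u, cgfT P X1 u + ε) (by simp only [hs, mem_setOf_eq]; linarith)
    rw [hfsplit u (cgfT P X1 u + ε), hfsplit u₀ (cgfT P X1 u₀)] at h
    have hεc : ε * (-c) = f (u, 0) + cgfT P X1 u * c - (f (u₀, 0) + cgfT P X1 u₀ * c) := by
      rw [hε, div_mul_cancel₀]
      linarith
    nlinarith [h, hεc]
  set g : E2 →L[ℝ] ℝ := f.comp (ContinuousLinearMap.inl ℝ E2 ℝ) with hg
  have hgap : ∀ u, g u = f (u, 0) := fun u => rfl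
  set vg : E2 := (InnerProductSpace.toDual ℝ E2).symm g with hvg
  have hvgap : ∀ u : E2, ⟪vg, u⟫ = f (u, 0) := fun u =>
    (InnerProductSpace.toDual_symm_apply).trans (hgap u)
  refine ⟨(-(c⁻¹)) • vg, fun u => ?_⟩
  have hinner : ⟪u - u₀, (-(c⁻¹)) • vg⟫ = (-(c⁻¹)) * (f (u, 0) - f (u₀, 0)) := by
    rw [real_inner_smul_right, real_inner_comm, inner_sub_right, hvgap, hvgap]
  rw [hinner]
  have h := hineq u
  have hcc : c * c⁻¹ = 1 := mul_inv_cancel₀ (ne_of_lt hclt)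
  have hcinv : c⁻¹ < 0 := inv_lt_zero.mpr hclt
  have hKey := mul_le_mul_of_nonneg_left h (le_of_lt (neg_pos.mpr hcinv))
  have e1 : -c⁻¹ * (f (u, 0) + cgfT P X1 u * c) = -c⁻¹ * f (u, 0) - cgfT P X1 u := by
    linear_combination (-(cgfT P X1 u)) * hcc
  have e2 : -c⁻¹ * (f (u₀, 0) + cgfT P X1 u₀ * c) = -c⁻¹ * f (u₀, 0) - cgfT P X1 u₀ := by
    linear_combination (-(cgfT P X1 u₀)) * hcc
  rw [e1, e2] at hKey
  nlinarith [hKey]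

end Aux5

section Aux6
set_option linter.unusedSectionVars false
variable {Ω : Type*} [MeasurableSpace Ω] (P : Measure Ω) [IsProbabilityMeasure P]
  (X1 : Ω → E2) (hX : Measurable X1)
  (hLap : ∀ u : E2, Integrable (fun ω => Real.exp ⟪u, X1 ω⟫) P)

include hX hLap

lemma cgfT_zero : cgfT P X1 0 = 0 := by
  have h1 : lapT P X1 0 = 1 := by
    simp [lapT, inner_zero_left]
  simp [cgfT, h1]

lemma barK_le_of_minorant {p b : ℝ} (hp : 0 ≤ p)
    (hmin : ∀ s : ℝ, ENNReal.ofReal (p * s - b) ≤ radMin P X1 s) :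
    barK P X1 p ≤ b := by
  refine barK_le P X1 hX hLap fun ℓ hℓ => ?_
  set u := p • ℓ with hu
  obtain ⟨v, hv⟩ := exists_subgrad P X1 hX hLap u
  have hIv : rateI P X1 v = ENNReal.ofReal (⟪u, v⟫ - cgfT P X1 u) := by
    rw [rateI]
    refine le_antisymm (iSup_le fun u' => ?_)
      (le_iSup (fun u' : E2 => ENNReal.ofReal (⟪u', v⟫ - cgfT P X1 u')) u)
    refine ENNReal.ofReal_le_ofReal ?_
    have h := hv u'
    have e : ⟪u' - u, v⟫ = ⟪u', v⟫ - ⟪u, v⟫ := inner_sub_left u' u v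
    linarith
  have hnn : 0 ≤ ⟪u, v⟫ - cgfT P X1 u := by
    have h := hv 0
    rw [cgfT_zero P X1 hX hLap] at h
    have e : ⟪(0:E2) - u, v⟫ = -⟪u, v⟫ := by rw [zero_sub, inner_neg_left]
    linarith
  have hs₀ : radMin P X1 ‖v‖ ≤ ENNReal.ofReal (⟪u, v⟫ - cgfT P X1 u) := by
    rw [← hIv]
    rcases eq_or_ne v 0 with h0 | h0
    · have h := radMin_le P X1 hX hLap ‖v‖ (norm_nonneg v) unit_norm
      rw [h0, norm_zero, zero_smul] at h
      rw [h0, norm_zero]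
      exact h
    · set ℓv : E2 := ‖v‖⁻¹ • v with hℓvdef
      have hn : ‖v‖ ≠ 0 := norm_ne_zero_iff.mpr h0
      have hℓv : ‖ℓv‖ = 1 := by
        rw [hℓvdef, norm_smul, norm_inv, norm_norm, inv_mul_cancel₀ hn]
      have h := radMin_le P X1 hX hLap ‖v‖ (norm_nonneg v) hℓv
      rwa [hℓvdef, smul_smul, mul_inv_cancel₀ hn, one_smul] at h
  have hkey := le_trans (hmin ‖v‖) hs₀
  have h2 : p * ‖v‖ - b ≤ ⟪u, v⟫ - cgfT P X1 u :=
    (ENNReal.ofReal_le_ofReal_iff hnn).mp hkey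
  have h3 : ⟪u, v⟫ ≤ p * ‖v‖ := by
    rw [hu, real_inner_smul_left]
    have h4 := real_inner_le_norm ℓ v
    rw [hℓ, one_mul] at h4
    exact mul_le_mul_of_nonneg_left h4 hp
  linarith

lemma rateI_lsc : LowerSemicontinuous (rateI P X1) := by
  intro v t ht
  obtain ⟨u, hu⟩ := lt_iSup_iff.mp ht
  have hc : Continuous fun v' : E2 => ENNReal.ofReal (⟪u, v'⟫ - cgfT P X1 u) :=
    ENNReal.continuous_ofReal.comp ((continuous_const.inner continuous_id).sub continuous_const)
  have hpre : (fun v' : E2 => ENNReal.ofReal (⟪u, v'⟫ - cgfT P X1 u)) ⁻¹' (Set.Ioi t) ∈ 𝓝 v :=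
    hc.continuousAt (Ioi_mem_nhds hu)
  filter_upwards [hpre] with v' hv'
  refine lt_of_lt_of_le hv' ?_
  rw [rateI]
  exact le_iSup (fun u' : E2 => ENNReal.ofReal (⟪u', v'⟫ - cgfT P X1 u')) u

lemma radMin_lscL {r : ℝ} (hr : 0 < r) {t : ℝ≥0∞} (ht : t < radMin P X1 r) :
    ∃ δ > 0, ∀ s : ℝ, r - δ < s → s ≤ r → t < radMin P X1 s := by
  by_contra hcon
  push_neg at hcon
  obtain ⟨t', ht1, ht2⟩ := exists_between ht
  have hsel : ∀ n : ℕ, ∃ s : ℝ, (r - min (1/((n:ℝ)+1)) r < s ∧ s ≤ r) ∧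
      ∃ ℓ : E2, ‖ℓ‖ = 1 ∧ rateI P X1 (s • ℓ) < t' := by
    intro n
    have hδ : 0 < min (1/((n:ℝ)+1)) r := lt_min (by positivity) hr
    obtain ⟨s, hs1, hs2, hs3⟩ := hcon _ hδ
    have hs0 : 0 ≤ s := by
      have := min_le_right (1/((n:ℝ)+1)) r
      linarith
    rw [radMin, if_neg (not_lt.mpr hs0)] at hs3
    have hlt : ⨅ ℓ ∈ {ℓ : E2 | ‖ℓ‖ = 1}, rateI P X1 (s • ℓ) < t' := lt_of_le_of_lt hs3 ht1
    obtain ⟨ℓ, hℓlt⟩ := iInf_lt_iff.mp hlt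
    obtain ⟨hmem, hlt2⟩ := iInf_lt_iff.mp hℓlt
    exact ⟨s, ⟨hs1, hs2⟩, ℓ, hmem, hlt2⟩
  choose sfun hsb ℓfun hℓ1 hℓ2 using hsel
  have hsph : ∀ n, ℓfun n ∈ Metric.sphere (0:E2) 1 := fun n =>
    mem_sphere_zero_iff_norm.mpr (hℓ1 n)
  obtain ⟨ℓs, hℓsmem, φ, hφmono, hφtend⟩ := (isCompact_sphere (0:E2) 1).tendsto_subseq hsph
  have hmin0 : Tendsto (fun n : ℕ => min (1/((n:ℝ)+1)) r) atTop (𝓝 0) := by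
    apply tendsto_of_tendsto_of_tendsto_of_le_of_le tendsto_const_nhds
      tendsto_one_div_add_atTop_nhds_zero_nat
    · exact fun n => le_min (by positivity) hr.le
    · exact fun n => min_le_left _ _
  have hstend : Tendsto (fun n => sfun n) atTop (𝓝 r) := by
    apply tendsto_of_tendsto_of_tendsto_of_le_of_le (g := fun n : ℕ => r - min (1/((n:ℝ)+1)) r)
      (h := fun _ : ℕ => r)
    · have := tendsto_const_nhds (x := r) (f := atTop (α := ℕ)) |>.sub hmin0
      simpa using this
    · exact tendsto_const_nhds
    · exact fun n => (hsb n).1.le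
    · exact fun n => (hsb n).2
  have hcomb : Tendsto (fun k => sfun (φ k) • ℓfun (φ k)) atTop (𝓝 (r • ℓs)) :=
    Tendsto.smul (hstend.comp hφmono.tendsto_atTop) hφtend
  have hlow : t' < rateI P X1 (r • ℓs) := by
    refine lt_of_lt_of_le ht2 ?_
    exact radMin_le P X1 hX hLap r hr.le (mem_sphere_zero_iff_norm.mp hℓsmem)
  have hev := rateI_lsc P X1 hX hLap (r • ℓs) t' hlow
  obtain ⟨k, hk⟩ := (hcomb.eventually hev).exists
  exact absurd hk (not_lt.mpr (hℓ2 (φ k)).le)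

end Aux6

lemma chord_of_convex {h : ℝ → ℝ≥0∞} (hconv : ENNConvexOn Set.univ h) {x y z : ℝ}
    (hxy : x < y) (hx : x ≤ z) (hy : z ≤ y) :
    h z ≤ ENNReal.ofReal ((y - z)/(y - x)) * h x + ENNReal.ofReal ((z - x)/(y - x)) * h y := by
  have hyx : 0 < y - x := by linarith
  set a : ℝ≥0 := Real.toNNReal ((y - z)/(y - x)) with ha
  set b : ℝ≥0 := Real.toNNReal ((z - x)/(y - x)) with hb
  have hav : ((a : ℝ)) = (y - z)/(y - x) := Real.coe_toNNReal _ (by apply div_nonneg <;> linarith)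
  have hbv : ((b : ℝ)) = (z - x)/(y - x) := Real.coe_toNNReal _ (by apply div_nonneg <;> linarith)
  have hab : a + b = 1 := by
    refine NNReal.coe_injective ?_
    push_cast
    rw [hav, hbv]
    field_simp
    ring
  have hz : z = (a : ℝ) * x + (b : ℝ) * y := by
    rw [hav, hbv]
    field_simp
    ring
  have hcc := hconv (mem_univ x) (mem_univ y) a b hab
  rw [← hz] at hcc
  calc h z ≤ (a : ℝ≥0∞) * h x + (b : ℝ≥0∞) * h y := hcc
    _ = _ := by
        rw [← ENNReal.ofReal_coe_nnreal (p := a), ← ENNReal.ofReal_coe_nnreal (p := b), hav, hbv]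

lemma slope_ineq {ψ h : ℝ → ℝ≥0∞} (hconv : ENNConvexOn Set.univ h) (hmin : ∀ y, h y ≤ ψ y)
    {r c s₁ s₂ : ℝ} (hc0 : 0 ≤ c) (hcr : ENNReal.ofReal c < h r) (h1 : s₁ < r) (h2 : r < s₂)
    (hf1 : ψ s₁ ≠ ⊤) (hf2 : ψ s₂ ≠ ⊤) :
    (c - (ψ s₁).toReal)/(r - s₁) ≤ ((ψ s₂).toReal - c)/(s₂ - r) := by
  set t₁ := (ψ s₁).toReal with ht₁
  set t₂ := (ψ s₂).toReal with ht₂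
  have ht₁0 : 0 ≤ t₁ := ENNReal.toReal_nonneg
  have ht₂0 : 0 ≤ t₂ := ENNReal.toReal_nonneg
  have hd : 0 < s₂ - s₁ := by linarith
  have hch := chord_of_convex hconv (lt_trans h1 h2) h1.le h2.le
  have hub : h r ≤ ENNReal.ofReal ((s₂ - r)/(s₂ - s₁) * t₁ + (r - s₁)/(s₂ - s₁) * t₂) := by
    refine le_trans hch ?_
    have e1 : ψ s₁ = ENNReal.ofReal t₁ := (ENNReal.ofReal_toReal hf1).symm
    have e2 : ψ s₂ = ENNReal.ofReal t₂ := (ENNReal.ofReal_toReal hf2).symm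
    calc ENNReal.ofReal ((s₂ - r)/(s₂ - s₁)) * h s₁ + ENNReal.ofReal ((r - s₁)/(s₂ - s₁)) * h s₂
        ≤ ENNReal.ofReal ((s₂ - r)/(s₂ - s₁)) * ψ s₁ + ENNReal.ofReal ((r - s₁)/(s₂ - s₁)) * ψ s₂ :=
          add_le_add (mul_le_mul_right (hmin s₁) _) (mul_le_mul_right (hmin s₂) _)
      _ = ENNReal.ofReal ((s₂ - r)/(s₂ - s₁) * t₁ + (r - s₁)/(s₂ - s₁) * t₂) := by
          have q1 : (0:ℝ) ≤ (s₂ - r)/(s₂ - s₁) := by apply div_nonneg <;> linarith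
          have q2 : (0:ℝ) ≤ (r - s₁)/(s₂ - s₁) := by apply div_nonneg <;> linarith
          rw [e1, e2, ← ENNReal.ofReal_mul q1, ← ENNReal.ofReal_mul q2,
            ← ENNReal.ofReal_add (by positivity) (by positivity)]
  have hclt : c < (s₂ - r)/(s₂ - s₁) * t₁ + (r - s₁)/(s₂ - s₁) * t₂ :=
    (ENNReal.ofReal_lt_ofReal_iff_of_nonneg hc0).mp (lt_of_lt_of_le hcr hub)
  rw [div_le_div_iff₀ (by linarith) (by linarith)]
  have hexp : c * (s₂ - s₁) < (s₂ - r) * t₁ + (r - s₁) * t₂ := by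
    calc c * (s₂ - s₁) < ((s₂ - r)/(s₂ - s₁) * t₁ + (r - s₁)/(s₂ - s₁) * t₂) * (s₂ - s₁) :=
          mul_lt_mul_of_pos_right hclt hd
      _ = (s₂ - r) * t₁ + (r - s₁) * t₂ := by field_simp
  nlinarith [hexp]

/-- For every `r ≥ |μ|`, `(conv ubar I)(r) = (bar K)*(r)`: the largest
convex minorant of the radial minimum of the rate function equals, on `[|μ|, ∞)`, the
Legendre–Fenchel conjugate of the radial maximum of the cumulant generating function. -/
theorem convMin_radMin_eq_barKconj
    {Ω : Type*} [MeasurableSpace Ω] (P : Measure Ω) [IsProbabilityMeasure P]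
    (X1 : Ω → E2) (hX : Measurable X1)
    (hLap : ∀ u : E2, Integrable (fun ω => Real.exp ⟪u, X1 ω⟫) P)
    (r : ℝ) (hr : ‖meanv P X1‖ ≤ r) :
    convMin (radMin P X1) r = barKconj P X1 r := by
  refine le_antisymm ?_ (barKconj_le_convMin P X1 hX hLap r)
  rw [convMin]
  refine iSup₂_le fun h hmem => ?_
  obtain ⟨hconv, hminor⟩ := hmem
  set r₀ := ‖meanv P X1‖ with hr₀def
  have hψ0 : radMin P X1 r₀ = 0 := radMin_mean P X1 hX hLap
  have hr0 : 0 ≤ r₀ := norm_nonneg _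
  rcases eq_or_lt_of_le hr with hreq | hrgt
  · calc h r ≤ radMin P X1 r := hminor r
      _ = 0 := by rw [← hreq]; exact hψ0
      _ ≤ barKconj P X1 r := zero_le
  · by_contra hcon
    push_neg at hcon
    obtain ⟨c, hc0, hc1, hc2⟩ := ENNReal.lt_iff_exists_real_btwn.mp hcon
    suffices hS : ENNReal.ofReal c ≤ barKconj P X1 r by exact absurd hc1 (not_lt.mpr hS)
    have hrpos : 0 < r := lt_of_le_of_lt hr0 hrgt
    have star : ∀ p : ℝ, 0 ≤ p →
        (∀ s : ℝ, ENNReal.ofReal (p * s - (p * r - c)) ≤ radMin P X1 s) →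
        ENNReal.ofReal c ≤ barKconj P X1 r := by
      intro p hp hminφ
      have hb := barK_le_of_minorant P X1 hX hLap hp hminφ
      have h1 : ENNReal.ofReal c ≤ ENNReal.ofReal (p * r - barK P X1 p) :=
        ENNReal.ofReal_le_ofReal (by linarith)
      refine le_trans h1 ?_
      rw [barKconj]
      exact le_iSup₂ (f := fun (p : ℝ) (_ : p ∈ Set.Ici (0:ℝ)) =>
        ENNReal.ofReal (p * r - barK P X1 p)) p hp
    by_cases hB : ∃ y : ℝ, r < y ∧ radMin P X1 y ≠ ⊤
    · -- Case B: ψ finite somewhere to the right of r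
      obtain ⟨y₀, hy₀r, hy₀fin⟩ := hB
      set SlopeSet : Set ℝ := {q | ∃ s : ℝ, 0 ≤ s ∧ s < r ∧ radMin P X1 s ≠ ⊤ ∧
          q = (c - (radMin P X1 s).toReal)/(r - s)} with hSS
      have hψ0ne : radMin P X1 r₀ ≠ ⊤ := by rw [hψ0]; exact ENNReal.zero_ne_top
      have hel0 : (c - (radMin P X1 r₀).toReal)/(r - r₀) ∈ SlopeSet :=
        ⟨r₀, hr0, hrgt, hψ0ne, rfl⟩
      have hne : SlopeSet.Nonempty := ⟨_, hel0⟩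
      have hub : ∀ s₂ : ℝ, r < s₂ → radMin P X1 s₂ ≠ ⊤ → ∀ q ∈ SlopeSet,
          q ≤ ((radMin P X1 s₂).toReal - c)/(s₂ - r) := by
        rintro s₂ hs₂ hs₂fin q ⟨s, hs0, hsr, hsfin, rfl⟩
        exact slope_ineq hconv hminor hc0 hc2 hsr hs₂ hsfin hs₂fin
      have hbdd : BddAbove SlopeSet := ⟨_, hub y₀ hy₀r hy₀fin⟩
      set p := sSup SlopeSet with hp
      have hppos : 0 ≤ p := by
        have h1 := le_csSup hbdd hel0
        rw [hψ0] at h1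
        simp only [ENNReal.toReal_zero, sub_zero] at h1
        have h2 : 0 ≤ c / (r - r₀) := by
          apply div_nonneg hc0
          linarith
        linarith
      have hminφ : ∀ s : ℝ, ENNReal.ofReal (p * s - (p * r - c)) ≤ radMin P X1 s := by
        intro s
        rcases lt_or_ge s 0 with hs | hs0
        · rw [radMin, if_pos hs]; exact le_top
        rcases eq_or_ne (radMin P X1 s) ⊤ with htop | hfin
        · rw [htop]; exact le_top
        rcases lt_trichotomy s r with hsr | hsr | hsr
        · have hel : (c - (radMin P X1 s).toReal)/(r - s) ∈ SlopeSet := ⟨s, hs0, hsr, hfin, rfl⟩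
          have hps := le_csSup hbdd hel
          rw [div_le_iff₀ (by linarith)] at hps
          have hle : p * s - (p * r - c) ≤ (radMin P X1 s).toReal := by nlinarith [hps]
          calc ENNReal.ofReal (p * s - (p * r - c)) ≤ ENNReal.ofReal ((radMin P X1 s).toReal) :=
                ENNReal.ofReal_le_ofReal hle
            _ = radMin P X1 s := ENNReal.ofReal_toReal hfin
        · have he : p * s - (p * r - c) = c := by rw [hsr]; ring
          rw [he, hsr]
          exact le_trans hc2.le (hminor r)
        · have hps : p ≤ ((radMin P X1 s).toReal - c)/(s - r) :=
            csSup_le hne (hub s hsr hfin)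
          rw [le_div_iff₀ (by linarith)] at hps
          have hle : p * s - (p * r - c) ≤ (radMin P X1 s).toReal := by nlinarith [hps]
          calc ENNReal.ofReal (p * s - (p * r - c)) ≤ ENNReal.ofReal ((radMin P X1 s).toReal) :=
                ENNReal.ofReal_le_ofReal hle
            _ = radMin P X1 s := ENNReal.ofReal_toReal hfin
      exact star p hppos hminφ
    · -- Case A: ψ = ⊤ on (r, ∞); use lower semicontinuity at r
      push_neg at hB
      have hψr : ENNReal.ofReal c < radMin P X1 r := lt_of_lt_of_le hc2 (hminor r)
      obtain ⟨δ, hδpos, hδ⟩ := radMin_lscL P X1 hX hLap hrpos hψr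
      set p := c / δ with hp
      have hppos : 0 ≤ p := div_nonneg hc0 hδpos.le
      have hpδ : p * δ = c := div_mul_cancel₀ c hδpos.ne'
      have hminφ : ∀ s : ℝ, ENNReal.ofReal (p * s - (p * r - c)) ≤ radMin P X1 s := by
        intro s
        rcases lt_or_ge r s with hsr | hsr
        · rw [hB s hsr]; exact le_top
        rcases le_or_gt s (r - δ) with hs1 | hs2
        · have hmul : p * δ ≤ p * (r - s) := mul_le_mul_of_nonneg_left (by linarith) hppos
          have hle : p * s - (p * r - c) ≤ 0 := by nlinarith [hmul, hpδ]
          rw [ENNReal.ofReal_eq_zero.mpr hle]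
          exact zero_le
        · have hψs := hδ s hs2 hsr
          refine le_trans ?_ hψs.le
          refine ENNReal.ofReal_le_ofReal ?_
          nlinarith [mul_nonneg hppos (by linarith : (0:ℝ) ≤ r - s)]
      exact star p hppos hminφ

end
end
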